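/- arXiv:1911.12737 — 5 statements merged into one kernel-verified Lean document; each statement's English description precedes it below -/
import Mathlib

section
/- deriveF computes the derivative of a focused syntax: for every LL(1) focused syntax (s, c) and token t, if deriveF t (s, c) = some (s', c') then for all token sequences ts and values v, Matches (unfocus (s', c')) ts v if and only if Matches (unfocus (s, c)) (t :: ts) v. -/
set_option autoImplicit false

/-- Context-free syntaxes (value-aware context-free expressions). -/
inductive Syn (Token Kind : Type) (Var : Type → Type) : Type → Type 1 where
  | elem (k : Kind) : Syn Token Kind Var Token
  | fail {A : Type} : Syn Token Kind Var A
  | eps {A : Type} (v : A) : Syn Token Kind Var A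
  | disj {A : Type} (s₁ s₂ : Syn Token Kind Var A) : Syn Token Kind Var A
  | seqn {A B : Type} (s₁ : Syn Token Kind Var A) (s₂ : Syn Token Kind Var B) :
      Syn Token Kind Var (A × B)
  | map {A B : Type} (f : A → B) (s : Syn Token Kind Var A) : Syn Token Kind Var B
  | var {A : Type} (x : Var A) : Syn Token Kind Var A

section

variable {Token Kind : Type} {Var : Type → Type}
variable (kd : Token → Kind) (env : ∀ A : Type, Var A → Syn Token Kind Var A)

/-- Semantics of syntaxes. -/
inductive Matches : ∀ {A : Type}, Syn Token Kind Var A → List Token → A → Prop where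
  | elem {k : Kind} {t : Token} (h : kd t = k) : Matches (Syn.elem k) [t] t
  | eps {A : Type} (v : A) : Matches (Syn.eps v) [] v
  | disjL {A : Type} {s₁ s₂ : Syn Token Kind Var A} {ts : List Token} {v : A} :
      Matches s₁ ts v → Matches (Syn.disj s₁ s₂) ts v
  | disjR {A : Type} {s₁ s₂ : Syn Token Kind Var A} {ts : List Token} {v : A} :
      Matches s₂ ts v → Matches (Syn.disj s₁ s₂) ts v
  | seqn {A B : Type} {s₁ : Syn Token Kind Var A} {s₂ : Syn Token Kind Var B}
      {ts₁ ts₂ : List Token} {v₁ : A} {v₂ : B} :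
      Matches s₁ ts₁ v₁ → Matches s₂ ts₂ v₂ →
      Matches (Syn.seqn s₁ s₂) (ts₁ ++ ts₂) (v₁, v₂)
  | map {A B : Type} (f : A → B) {s : Syn Token Kind Var A} {ts : List Token} {v : A} :
      Matches s ts v → Matches (Syn.map f s) ts (f v)
  | var {A : Type} (x : Var A) {ts : List Token} {v : A} :
      Matches (env A x) ts v → Matches (Syn.var x) ts v

/-- Productivity. -/
inductive Productive : ∀ {A : Type}, Syn Token Kind Var A → Prop where
  | eps {A : Type} (v : A) : Productive (Syn.eps v)
  | elem (k : Kind) : Productive (Syn.elem k)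
  | disjL {A : Type} {s₁ s₂ : Syn Token Kind Var A} :
      Productive s₁ → Productive (Syn.disj s₁ s₂)
  | disjR {A : Type} {s₁ s₂ : Syn Token Kind Var A} :
      Productive s₂ → Productive (Syn.disj s₁ s₂)
  | seqn {A B : Type} {s₁ : Syn Token Kind Var A} {s₂ : Syn Token Kind Var B} :
      Productive s₁ → Productive s₂ → Productive (Syn.seqn s₁ s₂)
  | map {A B : Type} (f : A → B) {s : Syn Token Kind Var A} :
      Productive s → Productive (Syn.map f s)
  | var {A : Type} (x : Var A) : Productive (env A x) → Productive (Syn.var x)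

/-- Nullability, with associated value. -/
inductive Nullable : ∀ {A : Type}, Syn Token Kind Var A → A → Prop where
  | eps {A : Type} (v : A) : Nullable (Syn.eps v) v
  | disjL {A : Type} {s₁ s₂ : Syn Token Kind Var A} {v : A} :
      Nullable s₁ v → Nullable (Syn.disj s₁ s₂) v
  | disjR {A : Type} {s₁ s₂ : Syn Token Kind Var A} {v : A} :
      Nullable s₂ v → Nullable (Syn.disj s₁ s₂) v
  | seqn {A B : Type} {s₁ : Syn Token Kind Var A} {s₂ : Syn Token Kind Var B} {v₁ : A} {v₂ : B} :
      Nullable s₁ v₁ → Nullable s₂ v₂ → Nullable (Syn.seqn s₁ s₂) (v₁, v₂)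
  | map {A B : Type} (f : A → B) {s : Syn Token Kind Var A} {v : A} :
      Nullable s v → Nullable (Syn.map f s) (f v)
  | var {A : Type} (x : Var A) {v : A} : Nullable (env A x) v → Nullable (Syn.var x) v

/-- First sets: `InFirst env k s` means `k ∈ First s`. -/
inductive InFirst : ∀ {A : Type}, Kind → Syn Token Kind Var A → Prop where
  | elem (k : Kind) : InFirst k (Syn.elem k)
  | disjL {A : Type} {k : Kind} {s₁ s₂ : Syn Token Kind Var A} :
      InFirst k s₁ → InFirst k (Syn.disj s₁ s₂)
  | disjR {A : Type} {k : Kind} {s₁ s₂ : Syn Token Kind Var A} :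
      InFirst k s₂ → InFirst k (Syn.disj s₁ s₂)
  | seqnL {A B : Type} {k : Kind} {s₁ : Syn Token Kind Var A} {s₂ : Syn Token Kind Var B} :
      InFirst k s₁ → Productive env s₂ → InFirst k (Syn.seqn s₁ s₂)
  | seqnR {A B : Type} {k : Kind} {s₁ : Syn Token Kind Var A} {s₂ : Syn Token Kind Var B}
      {v : A} : Nullable env s₁ v → InFirst k s₂ → InFirst k (Syn.seqn s₁ s₂)
  | map {A B : Type} {k : Kind} (f : A → B) {s : Syn Token Kind Var A} :
      InFirst k s → InFirst k (Syn.map f s)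
  | var {A : Type} {k : Kind} (x : Var A) : InFirst k (env A x) → InFirst k (Syn.var x)

/-- Should-not-follow sets: `InSNF env k s` means `k ∈ ShouldNotFollow s`. -/
inductive InSNF : ∀ {A : Type}, Kind → Syn Token Kind Var A → Prop where
  | disjL {A : Type} {k : Kind} {s₁ s₂ : Syn Token Kind Var A} :
      InSNF k s₁ → InSNF k (Syn.disj s₁ s₂)
  | disjR {A : Type} {k : Kind} {s₁ s₂ : Syn Token Kind Var A} :
      InSNF k s₂ → InSNF k (Syn.disj s₁ s₂)
  | disjFN {A : Type} {k : Kind} {s₁ s₂ : Syn Token Kind Var A} {v : A} :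
      InFirst env k s₁ → Nullable env s₂ v → InSNF k (Syn.disj s₁ s₂)
  | disjNF {A : Type} {k : Kind} {s₁ s₂ : Syn Token Kind Var A} {v : A} :
      Nullable env s₁ v → InFirst env k s₂ → InSNF k (Syn.disj s₁ s₂)
  | seqnL {A B : Type} {k : Kind} {s₁ : Syn Token Kind Var A} {s₂ : Syn Token Kind Var B}
      {v : B} : InSNF k s₁ → Nullable env s₂ v → InSNF k (Syn.seqn s₁ s₂)
  | seqnR {A B : Type} {k : Kind} {s₁ : Syn Token Kind Var A} {s₂ : Syn Token Kind Var B} :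
      Productive env s₁ → InSNF k s₂ → InSNF k (Syn.seqn s₁ s₂)
  | map {A B : Type} {k : Kind} (f : A → B) {s : Syn Token Kind Var A} :
      InSNF k s → InSNF k (Syn.map f s)
  | var {A : Type} {k : Kind} (x : Var A) : InSNF k (env A x) → InSNF k (Syn.var x)

/-- LL(1) conflicts. A syntax `s` is LL(1) iff `¬ HasConflict env s`. -/
inductive HasConflict : ∀ {A : Type}, Syn Token Kind Var A → Prop where
  | disjNN {A : Type} {s₁ s₂ : Syn Token Kind Var A} {v₁ v₂ : A} :
      Nullable env s₁ v₁ → Nullable env s₂ v₂ → HasConflict (Syn.disj s₁ s₂)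
  | disjFF {A : Type} {s₁ s₂ : Syn Token Kind Var A} {k : Kind} :
      InFirst env k s₁ → InFirst env k s₂ → HasConflict (Syn.disj s₁ s₂)
  | disjL {A : Type} {s₁ s₂ : Syn Token Kind Var A} :
      HasConflict s₁ → HasConflict (Syn.disj s₁ s₂)
  | disjR {A : Type} {s₁ s₂ : Syn Token Kind Var A} :
      HasConflict s₂ → HasConflict (Syn.disj s₁ s₂)
  | seqnSF {A B : Type} {s₁ : Syn Token Kind Var A} {s₂ : Syn Token Kind Var B} {k : Kind} :
      InSNF env k s₁ → InFirst env k s₂ → HasConflict (Syn.seqn s₁ s₂)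
  | seqnL {A B : Type} {s₁ : Syn Token Kind Var A} {s₂ : Syn Token Kind Var B} :
      HasConflict s₁ → HasConflict (Syn.seqn s₁ s₂)
  | seqnR {A B : Type} {s₁ : Syn Token Kind Var A} {s₂ : Syn Token Kind Var B} :
      HasConflict s₂ → HasConflict (Syn.seqn s₁ s₂)
  | map {A B : Type} (f : A → B) {s : Syn Token Kind Var A} :
      HasConflict s → HasConflict (Syn.map f s)
  | var {A : Type} (x : Var A) : HasConflict (env A x) → HasConflict (Syn.var x)

end

/-- Layers of a context, with above type `A` and below type `B`. -/
inductive Layer (Token Kind : Type) (Var : Type → Type) : Type → Type → Type 1 where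
  | apply {A B : Type} (f : A → B) : Layer Token Kind Var A B
  | prepend {A C : Type} (v : C) : Layer Token Kind Var A (C × A)
  | followBy {A C : Type} (s : Syn Token Kind Var C) : Layer Token Kind Var A (A × C)

/-- Type-aligned contexts (stacks of layers). -/
inductive Ctx (Token Kind : Type) (Var : Type → Type) : Type → Type → Type 1 where
  | nil {A : Type} : Ctx Token Kind Var A A
  | cons {A B C : Type} (l : Layer Token Kind Var A B) (c : Ctx Token Kind Var B C) :
      Ctx Token Kind Var A C

section

variable {Token Kind : Type} {Var : Type → Type}

def Ctx.isNil : ∀ {A B : Type}, Ctx Token Kind Var A B → Bool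
  | _, _, Ctx.nil => true
  | _, _, Ctx.cons _ _ => false

/-- Unfocusing a focused syntax. -/
def unfocus : ∀ {A B : Type}, Syn Token Kind Var A → Ctx Token Kind Var A B →
    Syn Token Kind Var B
  | _, _, s, Ctx.nil => s
  | _, _, s, Ctx.cons (Layer.apply f) c => unfocus (Syn.map f s) c
  | _, _, s, Ctx.cons (Layer.prepend v) c => unfocus (Syn.seqn (Syn.eps v) s) c
  | _, _, s, Ctx.cons (Layer.followBy s') c => unfocus (Syn.seqn s s') c

/-- Focused syntaxes with below type `B`. -/
def Focused (Token Kind : Type) (Var : Type → Type) (B : Type) : Type 1 :=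
  (A : Type) × Syn Token Kind Var A × Ctx Token Kind Var A B

def unfocusF {B : Type} (fs : Focused Token Kind Var B) : Syn Token Kind Var B :=
  unfocus fs.2.1 fs.2.2

def focusF {A : Type} (s : Syn Token Kind Var A) : Focused Token Kind Var A :=
  ⟨A, s, Ctx.nil⟩

/-- Plugging a value into a context. -/
def plug : ∀ {A B : Type}, A → Ctx Token Kind Var A B → Focused Token Kind Var B
  | A, _, v, Ctx.nil => ⟨A, Syn.eps v, Ctx.nil⟩
  | _, _, v, Ctx.cons (Layer.apply f) c => plug (f v) c
  | _, _, v, Ctx.cons (Layer.prepend v') c => plug (v', v) c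
  | _, _, v, Ctx.cons (Layer.followBy s) c => ⟨_, s, Ctx.cons (Layer.prepend v) c⟩

end

section

variable {Token Kind : Type} {Var : Type → Type}
variable (kd : Token → Kind) (env : ∀ A : Type, Var A → Syn Token Kind Var A)

/-- Inversion predicate for `Matches`. -/
def MInv : ∀ {C : Type}, Syn Token Kind Var C → List Token → C → Prop
  | _, Syn.elem k, ts, v => ts = [v] ∧ kd v = k
  | _, Syn.fail, _, _ => False
  | _, Syn.eps u, ts, v => ts = [] ∧ v = u
  | _, Syn.disj s₁ s₂, ts, v => Matches kd env s₁ ts v ∨ Matches kd env s₂ ts v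
  | _, Syn.seqn s₁ s₂, ts, v =>
      ∃ ts₁ ts₂, ts = ts₁ ++ ts₂ ∧ Matches kd env s₁ ts₁ v.1 ∧ Matches kd env s₂ ts₂ v.2
  | _, Syn.map f s, ts, v => ∃ u, v = f u ∧ Matches kd env s ts u
  | _, Syn.var x, ts, v => Matches kd env (env _ x) ts v

theorem matches_inv {C : Type} {S : Syn Token Kind Var C} {ts : List Token} {v : C}
    (h : Matches kd env S ts v) : MInv kd env S ts v := by
  induction h with
  | elem h => exact ⟨rfl, h⟩
  | eps v => exact ⟨rfl, rfl⟩
  | disjL h _ => exact Or.inl h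
  | disjR h _ => exact Or.inr h
  | seqn h₁ h₂ _ _ => exact ⟨_, _, rfl, h₁, h₂⟩
  | map f h _ => exact ⟨_, rfl, h⟩
  | var x h _ => exact h

/-- Inversion predicate for `Nullable`. -/
def NInv : ∀ {C : Type}, Syn Token Kind Var C → C → Prop
  | _, Syn.eps u, v => v = u
  | _, Syn.disj s₁ s₂, v => Nullable env s₁ v ∨ Nullable env s₂ v
  | _, Syn.seqn s₁ s₂, v => Nullable env s₁ v.1 ∧ Nullable env s₂ v.2
  | _, Syn.map f s, v => ∃ u, v = f u ∧ Nullable env s u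
  | _, Syn.var x, v => Nullable env (env _ x) v
  | _, _, _ => False

theorem nullable_inv {C : Type} {S : Syn Token Kind Var C} {v : C}
    (h : Nullable env S v) : NInv env S v := by
  induction h with
  | eps v => exact rfl
  | disjL h _ => exact Or.inl h
  | disjR h _ => exact Or.inr h
  | seqn h₁ h₂ _ _ => exact ⟨h₁, h₂⟩
  | map f h _ => exact ⟨_, rfl, h⟩
  | var x h _ => exact h

/-- Inversion predicate for `Productive`. -/
def PInv : ∀ {C : Type}, Syn Token Kind Var C → Prop
  | _, Syn.eps _ => True
  | _, Syn.elem _ => True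
  | _, Syn.disj s₁ s₂ => Productive env s₁ ∨ Productive env s₂
  | _, Syn.seqn s₁ s₂ => Productive env s₁ ∧ Productive env s₂
  | _, Syn.map _ s => Productive env s
  | _, Syn.var x => Productive env (env _ x)
  | _, Syn.fail => False

theorem productive_inv {C : Type} {S : Syn Token Kind Var C}
    (h : Productive env S) : PInv env S := by
  induction h with
  | eps v => trivial
  | elem k => trivial
  | disjL h _ => exact Or.inl h
  | disjR h _ => exact Or.inr h
  | seqn h₁ h₂ _ _ => exact ⟨h₁, h₂⟩
  | map f h _ => exact h
  | var x h _ => exact h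

/-- Inversion predicate for `InFirst`. -/
def FInv : ∀ {C : Type}, Kind → Syn Token Kind Var C → Prop
  | _, k, Syn.elem k' => k = k'
  | _, k, Syn.disj s₁ s₂ => InFirst env k s₁ ∨ InFirst env k s₂
  | _, k, Syn.seqn s₁ s₂ =>
      (InFirst env k s₁ ∧ Productive env s₂) ∨ (∃ v, Nullable env s₁ v ∧ InFirst env k s₂)
  | _, k, Syn.map _ s => InFirst env k s
  | _, k, Syn.var x => InFirst env k (env _ x)
  | _, _, _ => False

theorem first_inv {C : Type} {k : Kind} {S : Syn Token Kind Var C}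
    (h : InFirst env k S) : FInv env k S := by
  induction h with
  | elem k => exact rfl
  | disjL h _ => exact Or.inl h
  | disjR h _ => exact Or.inr h
  | seqnL h₁ h₂ _ => exact Or.inl ⟨h₁, h₂⟩
  | seqnR h₁ h₂ _ => exact Or.inr ⟨_, h₁, h₂⟩
  | map f h _ => exact h
  | var x h _ => exact h

/-- Inversion predicate for `InSNF`. -/
def SInv : ∀ {C : Type}, Kind → Syn Token Kind Var C → Prop
  | _, k, Syn.disj s₁ s₂ => InSNF env k s₁ ∨ InSNF env k s₂ ∨
      (InFirst env k s₁ ∧ ∃ v, Nullable env s₂ v) ∨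
      ((∃ v, Nullable env s₁ v) ∧ InFirst env k s₂)
  | _, k, Syn.seqn s₁ s₂ =>
      (InSNF env k s₁ ∧ ∃ v, Nullable env s₂ v) ∨ (Productive env s₁ ∧ InSNF env k s₂)
  | _, k, Syn.map _ s => InSNF env k s
  | _, k, Syn.var x => InSNF env k (env _ x)
  | _, _, _ => False

theorem snf_inv {C : Type} {k : Kind} {S : Syn Token Kind Var C}
    (h : InSNF env k S) : SInv env k S := by
  induction h with
  | disjL h _ => exact Or.inl h
  | disjR h _ => exact Or.inr (Or.inl h)
  | disjFN h₁ h₂ => exact Or.inr (Or.inr (Or.inl ⟨h₁, _, h₂⟩))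
  | disjNF h₁ h₂ => exact Or.inr (Or.inr (Or.inr ⟨⟨_, h₁⟩, h₂⟩))
  | seqnL h₁ h₂ _ => exact Or.inl ⟨h₁, _, h₂⟩
  | seqnR h₁ h₂ _ => exact Or.inr ⟨h₁, h₂⟩
  | map f h _ => exact h
  | var x h _ => exact h

/-- Inversion predicate for `HasConflict`. -/
def CInv : ∀ {C : Type}, Syn Token Kind Var C → Prop
  | _, Syn.disj s₁ s₂ =>
      ((∃ v₁, Nullable env s₁ v₁) ∧ ∃ v₂, Nullable env s₂ v₂) ∨
      (∃ k, InFirst env k s₁ ∧ InFirst env k s₂) ∨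
      HasConflict env s₁ ∨ HasConflict env s₂
  | _, Syn.seqn s₁ s₂ =>
      (∃ k, InSNF env k s₁ ∧ InFirst env k s₂) ∨ HasConflict env s₁ ∨ HasConflict env s₂
  | _, Syn.map _ s => HasConflict env s
  | _, Syn.var x => HasConflict env (env _ x)
  | _, _ => False

theorem conflict_inv {C : Type} {S : Syn Token Kind Var C}
    (h : HasConflict env S) : CInv env S := by
  induction h with
  | disjNN h₁ h₂ => exact Or.inl ⟨⟨_, h₁⟩, _, h₂⟩
  | disjFF h₁ h₂ => exact Or.inr (Or.inl ⟨_, h₁, h₂⟩)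
  | disjL h _ => exact Or.inr (Or.inr (Or.inl h))
  | disjR h _ => exact Or.inr (Or.inr (Or.inr h))
  | seqnSF h₁ h₂ => exact Or.inl ⟨_, h₁, h₂⟩
  | seqnL h _ => exact Or.inr (Or.inl h)
  | seqnR h _ => exact Or.inr (Or.inr h)
  | map f h _ => exact h
  | var x h _ => exact h
theorem nullable_matches {C : Type} {S : Syn Token Kind Var C} {v : C}
    (h : Nullable env S v) : Matches kd env S [] v := by
  induction h with
  | eps v => exact Matches.eps v
  | disjL _ ih => exact Matches.disjL ih
  | disjR _ ih => exact Matches.disjR ih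
  | seqn _ _ ih₁ ih₂ => exact Matches.seqn ih₁ ih₂
  | map f _ ih => exact Matches.map f ih
  | var x _ ih => exact Matches.var x ih

theorem nullable_productive {C : Type} {S : Syn Token Kind Var C} {v : C}
    (h : Nullable env S v) : Productive env S := by
  induction h with
  | eps v => exact Productive.eps v
  | disjL _ ih => exact Productive.disjL ih
  | disjR _ ih => exact Productive.disjR ih
  | seqn _ _ ih₁ ih₂ => exact Productive.seqn ih₁ ih₂
  | map f _ ih => exact Productive.map f ih
  | var x _ ih => exact Productive.var x ih

theorem matches_productive {C : Type} {S : Syn Token Kind Var C} {ts : List Token} {v : C}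
    (h : Matches kd env S ts v) : Productive env S := by
  induction h with
  | elem h => exact Productive.elem _
  | eps v => exact Productive.eps v
  | disjL _ ih => exact Productive.disjL ih
  | disjR _ ih => exact Productive.disjR ih
  | seqn _ _ ih₁ ih₂ => exact Productive.seqn ih₁ ih₂
  | map f _ ih => exact Productive.map f ih
  | var x _ ih => exact Productive.var x ih

theorem matches_nil_nullable {C : Type} {S : Syn Token Kind Var C} {ts : List Token} {v : C}
    (h : Matches kd env S ts v) (hts : ts = []) : Nullable env S v := by
  induction h with
  | elem h => simp at hts
  | eps v => exact Nullable.eps v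
  | disjL _ ih => exact Nullable.disjL (ih hts)
  | disjR _ ih => exact Nullable.disjR (ih hts)
  | seqn _ _ ih₁ ih₂ =>
      rcases List.append_eq_nil_iff.mp hts with ⟨h1, h2⟩
      exact Nullable.seqn (ih₁ h1) (ih₂ h2)
  | map f _ ih => exact Nullable.map f (ih hts)
  | var x _ ih => exact Nullable.var x (ih hts)

theorem matches_cons_first {C : Type} {S : Syn Token Kind Var C} {ts : List Token}
    {t : Token} {ts' : List Token} {v : C}
    (h : Matches kd env S ts v) (hts : ts = t :: ts') : InFirst env (kd t) S := by
  induction h generalizing ts' with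
  | elem h =>
      injection hts with h1 h2
      subst h1; subst h
      exact InFirst.elem _
  | eps v => simp at hts
  | disjL _ ih => exact InFirst.disjL (ih hts)
  | disjR _ ih => exact InFirst.disjR (ih hts)
  | seqn h₁ h₂ ih₁ ih₂ =>
      rename_i ts₁ ts₂ v₁ v₂
      cases ts₁ with
      | nil =>
          simp at hts
          exact InFirst.seqnR (matches_nil_nullable kd env h₁ rfl) (ih₂ hts)
      | cons a l =>
          simp at hts
          obtain ⟨rfl, -⟩ := hts
          exact InFirst.seqnL (ih₁ rfl) (matches_productive kd env h₂)
  | map f _ ih => exact InFirst.map f (ih hts)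
  | var x _ ih => exact InFirst.var x (ih hts)

theorem first_nullable_snf {C : Type} {k : Kind} {S : Syn Token Kind Var C}
    (h : InFirst env k S) : ∀ v, Nullable env S v → InSNF env k S := by
  induction h with
  | elem k => intro v hv; exact absurd (nullable_inv env hv) (by simp [NInv])
  | disjL h₁ ih =>
      intro v hv
      rcases nullable_inv env hv with hn | hn
      · exact InSNF.disjL (ih _ hn)
      · exact InSNF.disjFN h₁ hn
  | disjR h₂ ih =>
      intro v hv
      rcases nullable_inv env hv with hn | hn
      · exact InSNF.disjNF hn h₂
      · exact InSNF.disjR (ih _ hn)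
  | seqnL h₁ hp ih =>
      intro v hv
      obtain ⟨n₁, n₂⟩ := nullable_inv env hv
      exact InSNF.seqnL (ih _ n₁) n₂
  | seqnR hn₁ h₂ ih =>
      intro v hv
      obtain ⟨n₁, n₂⟩ := nullable_inv env hv
      exact InSNF.seqnR (nullable_productive env n₁) (ih _ n₂)
  | map f _ ih =>
      intro v hv
      obtain ⟨u, rfl, hn⟩ := nullable_inv env hv
      exact InSNF.map f (ih _ hn)
  | var x _ ih =>
      intro v hv
      exact InSNF.var x (ih _ (nullable_inv env hv))

theorem conflict_mono : ∀ {A B : Type} (s : Syn Token Kind Var A)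
    (c : Ctx Token Kind Var A B), HasConflict env s → HasConflict env (unfocus s c)
  | _, _, _, Ctx.nil, h => h
  | _, _, s, Ctx.cons (Layer.apply f) c, h => conflict_mono _ c (HasConflict.map f h)
  | _, _, s, Ctx.cons (Layer.prepend v) c, h => conflict_mono _ c (HasConflict.seqnR h)
  | _, _, s, Ctx.cons (Layer.followBy s') c, h => conflict_mono _ c (HasConflict.seqnL h)
/-- Simulation order on syntaxes (used to transport conflict-freeness). -/
def Sim {A : Type} (S₁ S₂ : Syn Token Kind Var A) : Prop :=
  (HasConflict env S₁ → HasConflict env S₂) ∧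
  (∀ k, InFirst env k S₁ → InFirst env k S₂) ∧
  (∀ v, Nullable env S₁ v → Nullable env S₂ v) ∧
  (∀ k, InSNF env k S₁ → InSNF env k S₂) ∧
  (Productive env S₁ → Productive env S₂)

theorem sim_refl {A : Type} (S : Syn Token Kind Var A) : Sim env S S :=
  ⟨id, fun _ => id, fun _ => id, fun _ => id, id⟩

theorem sim_eps {A : Type} {S : Syn Token Kind Var A} {v : A}
    (hv : Nullable env S v) : Sim env (Syn.eps v) S := by
  refine ⟨fun h => absurd (conflict_inv env h) (by simp [CInv]),
    fun k h => absurd (first_inv env h) (by simp [FInv]),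
    fun w h => ?_,
    fun k h => absurd (snf_inv env h) (by simp [SInv]),
    fun _ => nullable_productive env hv⟩
  have := nullable_inv env h
  simp only [NInv] at this
  subst this; exact hv

theorem sim_map {A B : Type} {S₁ S₂ : Syn Token Kind Var A} (f : A → B)
    (h : Sim env S₁ S₂) : Sim env (Syn.map f S₁) (Syn.map f S₂) := by
  obtain ⟨hc, hf, hn, hs, hp⟩ := h
  refine ⟨fun h => ?_, fun k h => ?_, fun v h => ?_, fun k h => ?_, fun h => ?_⟩
  · exact HasConflict.map f (hc (conflict_inv env h))
  · exact InFirst.map f (hf _ (first_inv env h))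
  · obtain ⟨u, rfl, hu⟩ := nullable_inv env h
    exact Nullable.map f (hn _ hu)
  · exact InSNF.map f (hs _ (snf_inv env h))
  · exact Productive.map f (hp (productive_inv env h))

theorem sim_seqn {A B : Type} {a₁ a₂ : Syn Token Kind Var A} {b₁ b₂ : Syn Token Kind Var B}
    (ha : Sim env a₁ a₂) (hb : Sim env b₁ b₂) :
    Sim env (Syn.seqn a₁ b₁) (Syn.seqn a₂ b₂) := by
  obtain ⟨hac, haf, han, has, hap⟩ := ha
  obtain ⟨hbc, hbf, hbn, hbs, hbp⟩ := hb
  refine ⟨fun h => ?_, fun k h => ?_, fun v h => ?_, fun k h => ?_, fun h => ?_⟩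
  · rcases conflict_inv env h with ⟨k, h1, h2⟩ | h1 | h1
    · exact HasConflict.seqnSF (has _ h1) (hbf _ h2)
    · exact HasConflict.seqnL (hac h1)
    · exact HasConflict.seqnR (hbc h1)
  · rcases first_inv env h with ⟨h1, h2⟩ | ⟨v, h1, h2⟩
    · exact InFirst.seqnL (haf _ h1) (hbp h2)
    · exact InFirst.seqnR (han _ h1) (hbf _ h2)
  · obtain ⟨h1, h2⟩ := nullable_inv env h
    have := Nullable.seqn (han _ h1) (hbn _ h2)
    simpa using this
  · rcases snf_inv env h with ⟨h1, v, h2⟩ | ⟨h1, h2⟩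
    · exact InSNF.seqnL (has _ h1) (hbn _ h2)
    · exact InSNF.seqnR (hap h1) (hbs _ h2)
  · obtain ⟨h1, h2⟩ := productive_inv env h
    exact Productive.seqn (hap h1) (hbp h2)

theorem sim_disjL {A : Type} (s₁ s₂ : Syn Token Kind Var A) :
    Sim env s₁ (Syn.disj s₁ s₂) :=
  ⟨HasConflict.disjL, fun _ => InFirst.disjL, fun _ => Nullable.disjL,
    fun _ => InSNF.disjL, Productive.disjL⟩

theorem sim_disjR {A : Type} (s₁ s₂ : Syn Token Kind Var A) :
    Sim env s₂ (Syn.disj s₁ s₂) :=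
  ⟨HasConflict.disjR, fun _ => InFirst.disjR, fun _ => Nullable.disjR,
    fun _ => InSNF.disjR, Productive.disjR⟩

theorem sim_var {A : Type} (x : Var A) :
    Sim env (env A x) (Syn.var x) :=
  ⟨HasConflict.var x, fun _ => InFirst.var x, fun _ => Nullable.var x,
    fun _ => InSNF.var x, Productive.var x⟩

theorem sim_unfocus : ∀ {A B : Type} {S₁ S₂ : Syn Token Kind Var A}
    (c : Ctx Token Kind Var A B), Sim env S₁ S₂ →
    Sim env (unfocus S₁ c) (unfocus S₂ c)
  | _, _, _, _, Ctx.nil, h => h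
  | _, _, _, _, Ctx.cons (Layer.apply f) c, h => sim_unfocus c (sim_map env f h)
  | _, _, _, _, Ctx.cons (Layer.prepend v) c, h =>
      sim_unfocus c (sim_seqn env (sim_refl env _) h)
  | _, _, _, _, Ctx.cons (Layer.followBy s') c, h =>
      sim_unfocus c (sim_seqn env h (sim_refl env _))

theorem plug_sim : ∀ {A B : Type} (c : Ctx Token Kind Var A B) {S : Syn Token Kind Var A}
    {v : A}, Nullable env S v → Sim env (unfocusF (plug v c)) (unfocus S c)
  | _, _, Ctx.nil, _, _, hv => sim_eps env hv
  | _, _, Ctx.cons (Layer.apply f) c, _, _, hv => plug_sim c (Nullable.map f hv)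
  | _, _, Ctx.cons (Layer.prepend v') c, _, _, hv =>
      plug_sim c (Nullable.seqn (Nullable.eps v') hv)
  | _, _, Ctx.cons (Layer.followBy s') c, _, _, hv =>
      sim_unfocus env c (sim_seqn env (sim_eps env hv) (sim_refl env _))
theorem congr_map {A B : Type} {sA sB : Syn Token Kind Var A} (f : A → B)
    (H : ∀ ts w, Matches kd env sA ts w ↔ Matches kd env sB ts w) :
    ∀ ts w, Matches kd env (Syn.map f sA) ts w ↔ Matches kd env (Syn.map f sB) ts w := by
  intro ts w
  constructor
  · intro h
    obtain ⟨u, rfl, hu⟩ := matches_inv kd env h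
    exact Matches.map f ((H ts u).mp hu)
  · intro h
    obtain ⟨u, rfl, hu⟩ := matches_inv kd env h
    exact Matches.map f ((H ts u).mpr hu)

theorem congr_seqnL {A B : Type} {sA sB : Syn Token Kind Var A} (s' : Syn Token Kind Var B)
    (H : ∀ ts w, Matches kd env sA ts w ↔ Matches kd env sB ts w) :
    ∀ ts w, Matches kd env (Syn.seqn sA s') ts w ↔ Matches kd env (Syn.seqn sB s') ts w := by
  intro ts w
  constructor
  · intro h
    obtain ⟨ts₁, ts₂, rfl, h₁, h₂⟩ := matches_inv kd env h
    exact Matches.seqn ((H ts₁ w.1).mp h₁) h₂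
  · intro h
    obtain ⟨ts₁, ts₂, rfl, h₁, h₂⟩ := matches_inv kd env h
    exact Matches.seqn ((H ts₁ w.1).mpr h₁) h₂

theorem congr_seqnR {A B : Type} {sA sB : Syn Token Kind Var B} (s' : Syn Token Kind Var A)
    (H : ∀ ts w, Matches kd env sA ts w ↔ Matches kd env sB ts w) :
    ∀ ts w, Matches kd env (Syn.seqn s' sA) ts w ↔ Matches kd env (Syn.seqn s' sB) ts w := by
  intro ts w
  constructor
  · intro h
    obtain ⟨ts₁, ts₂, rfl, h₁, h₂⟩ := matches_inv kd env h
    exact Matches.seqn h₁ ((H ts₂ w.2).mp h₂)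
  · intro h
    obtain ⟨ts₁, ts₂, rfl, h₁, h₂⟩ := matches_inv kd env h
    exact Matches.seqn h₁ ((H ts₂ w.2).mpr h₂)

theorem unfocus_congr : ∀ {A B : Type} (c : Ctx Token Kind Var A B)
    {sA sB : Syn Token Kind Var A},
    (∀ ts w, Matches kd env sA ts w ↔ Matches kd env sB ts w) →
    ∀ ts w, Matches kd env (unfocus sA c) ts w ↔ Matches kd env (unfocus sB c) ts w
  | _, _, Ctx.nil, _, _, H => H
  | _, _, Ctx.cons (Layer.apply f) c, _, _, H => unfocus_congr c (congr_map kd env f H)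
  | _, _, Ctx.cons (Layer.prepend v) c, _, _, H =>
      unfocus_congr c (congr_seqnR kd env (Syn.eps v) H)
  | _, _, Ctx.cons (Layer.followBy s') c, _, _, H =>
      unfocus_congr c (congr_seqnL kd env s' H)

theorem plug_matches : ∀ {A B : Type} (c : Ctx Token Kind Var A B) (v : A)
    (ts : List Token) (w : B),
    Matches kd env (unfocusF (plug v c)) ts w ↔ Matches kd env (unfocus (Syn.eps v) c) ts w
  | _, _, Ctx.nil, v, ts, w => Iff.rfl
  | _, _, Ctx.cons (Layer.apply f) c, v, ts, w => by
      refine (plug_matches c (f v) ts w).trans (unfocus_congr kd env c ?_ ts w)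
      intro ts' u
      constructor
      · intro h
        obtain ⟨rfl, rfl⟩ := matches_inv kd env h
        exact Matches.map f (Matches.eps v)
      · intro h
        obtain ⟨u', rfl, hu⟩ := matches_inv kd env h
        obtain ⟨rfl, rfl⟩ := matches_inv kd env hu
        exact Matches.eps _
  | _, _, Ctx.cons (Layer.prepend v') c, v, ts, w => by
      refine (plug_matches c (v', v) ts w).trans (unfocus_congr kd env c ?_ ts w)
      intro ts' u
      constructor
      · intro h
        obtain ⟨rfl, rfl⟩ := matches_inv kd env h
        exact Matches.seqn (Matches.eps v') (Matches.eps v)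
      · intro h
        obtain ⟨ts₁, ts₂, rfl, h₁, h₂⟩ := matches_inv kd env h
        obtain ⟨rfl, h1⟩ := matches_inv kd env h₁
        obtain ⟨rfl, h2⟩ := matches_inv kd env h₂
        have : u = (v', v) := by
          rw [← Prod.mk.eta (p := u), h1, h2]
        rw [this]
        exact Matches.eps _
  | _, _, Ctx.cons (Layer.followBy s') c, v, ts, w => Iff.rfl
/-- Restricted congruence through contexts: equivalence on `[]` (with an SNF escape
hatch) and on lists starting with `t` is enough, given conflict-freeness. -/
theorem ctx_ext : ∀ {A B : Type} (c : Ctx Token Kind Var A B)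
    {sA sB : Syn Token Kind Var A} {t : Token},
    ¬ HasConflict env (unfocus sB c) →
    (∀ ts w, Matches kd env sA (t :: ts) w → Matches kd env sB (t :: ts) w) →
    (∀ ts w, Matches kd env sB (t :: ts) w → Matches kd env sA (t :: ts) w) →
    (∀ w, Matches kd env sA [] w → Matches kd env sB [] w) →
    (∀ w, Matches kd env sB [] w → Matches kd env sA [] w ∨ InSNF env (kd t) sB) →
    ∀ ts w, Matches kd env (unfocus sA c) (t :: ts) w ↔
      Matches kd env (unfocus sB c) (t :: ts) w
  | _, _, Ctx.nil, sA, sB, t, hC, Hf, Hb, H0f, H0b, ts, w => ⟨Hf ts w, Hb ts w⟩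
  | _, _, Ctx.cons (Layer.apply f) c, sA, sB, t, hC, Hf, Hb, H0f, H0b, ts, w => by
      refine ctx_ext c hC ?_ ?_ ?_ ?_ ts w
      · intro ts' u h
        obtain ⟨u', rfl, hu⟩ := matches_inv kd env h
        exact Matches.map f (Hf _ _ hu)
      · intro ts' u h
        obtain ⟨u', rfl, hu⟩ := matches_inv kd env h
        exact Matches.map f (Hb _ _ hu)
      · intro u h
        obtain ⟨u', rfl, hu⟩ := matches_inv kd env h
        exact Matches.map f (H0f _ hu)
      · intro u h
        obtain ⟨u', rfl, hu⟩ := matches_inv kd env h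
        rcases H0b _ hu with h' | h'
        · exact Or.inl (Matches.map f h')
        · exact Or.inr (InSNF.map f h')
  | _, _, Ctx.cons (Layer.prepend v') c, sA, sB, t, hC, Hf, Hb, H0f, H0b, ts, w => by
      refine ctx_ext c hC ?_ ?_ ?_ ?_ ts w
      · intro ts' u h
        obtain ⟨ts₁, ts₂, hts, h₁, h₂⟩ := matches_inv kd env h
        obtain ⟨rfl, h1⟩ := matches_inv kd env h₁
        simp only [List.nil_append] at hts
        subst hts
        exact Matches.seqn h₁ (Hf _ _ h₂)
      · intro ts' u h
        obtain ⟨ts₁, ts₂, hts, h₁, h₂⟩ := matches_inv kd env h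
        obtain ⟨rfl, h1⟩ := matches_inv kd env h₁
        simp only [List.nil_append] at hts
        subst hts
        exact Matches.seqn h₁ (Hb _ _ h₂)
      · intro u h
        obtain ⟨ts₁, ts₂, hts, h₁, h₂⟩ := matches_inv kd env h
        obtain ⟨rfl, h1⟩ := matches_inv kd env h₁
        simp only [List.nil_append] at hts
        subst hts
        exact Matches.seqn h₁ (H0f _ h₂)
      · intro u h
        obtain ⟨ts₁, ts₂, hts, h₁, h₂⟩ := matches_inv kd env h
        obtain ⟨rfl, h1⟩ := matches_inv kd env h₁
        simp only [List.nil_append] at hts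
        subst hts
        rcases H0b _ h₂ with h' | h'
        · exact Or.inl (Matches.seqn h₁ h')
        · exact Or.inr (InSNF.seqnR (Productive.eps v') h')
  | _, _, Ctx.cons (Layer.followBy s') c, sA, sB, t, hC, Hf, Hb, H0f, H0b, ts, w => by
      refine ctx_ext c hC ?_ ?_ ?_ ?_ ts w
      · intro ts' u h
        obtain ⟨ts₁, ts₂, hts, h₁, h₂⟩ := matches_inv kd env h
        cases ts₁ with
        | nil =>
            simp only [List.nil_append] at hts
            subst hts
            exact Matches.seqn (H0f _ h₁) h₂
        | cons a l =>
            rw [List.cons_append] at hts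
            injection hts with h1 h2
            subst h1; subst h2
            exact Matches.seqn (Hf _ _ h₁) h₂
      · intro ts' u h
        obtain ⟨ts₁, ts₂, hts, h₁, h₂⟩ := matches_inv kd env h
        cases ts₁ with
        | nil =>
            simp only [List.nil_append] at hts
            subst hts
            rcases H0b _ h₁ with h' | h'
            · exact Matches.seqn h' h₂
            · exact absurd
                (conflict_mono env _ c
                  (HasConflict.seqnSF h' (matches_cons_first kd env h₂ rfl))) hC
        | cons a l =>
            rw [List.cons_append] at hts
            injection hts with h1 h2
            subst h1; subst h2
            exact Matches.seqn (Hb _ _ h₁) h₂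
      · intro u h
        obtain ⟨ts₁, ts₂, hts, h₁, h₂⟩ := matches_inv kd env h
        rcases List.append_eq_nil_iff.mp hts.symm with ⟨rfl, rfl⟩
        exact Matches.seqn (H0f _ h₁) h₂
      · intro u h
        obtain ⟨ts₁, ts₂, hts, h₁, h₂⟩ := matches_inv kd env h
        rcases List.append_eq_nil_iff.mp hts.symm with ⟨rfl, rfl⟩
        rcases H0b _ h₁ with h' | h'
        · exact Or.inl (Matches.seqn h' h₂)
        · exact Or.inr (InSNF.seqnL h' (matches_nil_nullable kd env h₂ rfl))

/-- Shift congruence through contexts. -/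
theorem ctx_shift : ∀ {A B : Type} (c : Ctx Token Kind Var A B)
    {sA sB : Syn Token Kind Var A} {t : Token},
    (∀ ts w, Matches kd env sA ts w ↔ Matches kd env sB (t :: ts) w) →
    (∀ w, ¬ Matches kd env sB [] w) →
    ∀ ts w, Matches kd env (unfocus sA c) ts w ↔
      Matches kd env (unfocus sB c) (t :: ts) w
  | _, _, Ctx.nil, sA, sB, t, HD, HN, ts, w => HD ts w
  | _, _, Ctx.cons (Layer.apply f) c, sA, sB, t, HD, HN, ts, w => by
      refine ctx_shift c ?_ ?_ ts w
      · intro ts' u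
        constructor
        · intro h
          obtain ⟨u', rfl, hu⟩ := matches_inv kd env h
          exact Matches.map f ((HD _ _).mp hu)
        · intro h
          obtain ⟨u', rfl, hu⟩ := matches_inv kd env h
          exact Matches.map f ((HD _ _).mpr hu)
      · intro u h
        obtain ⟨u', rfl, hu⟩ := matches_inv kd env h
        exact HN _ hu
  | _, _, Ctx.cons (Layer.prepend v') c, sA, sB, t, HD, HN, ts, w => by
      refine ctx_shift c ?_ ?_ ts w
      · intro ts' u
        constructor
        · intro h
          obtain ⟨ts₁, ts₂, hts, h₁, h₂⟩ := matches_inv kd env h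
          obtain ⟨rfl, h1⟩ := matches_inv kd env h₁
          simp only [List.nil_append] at hts
          subst hts
          exact Matches.seqn h₁ ((HD _ _).mp h₂)
        · intro h
          obtain ⟨ts₁, ts₂, hts, h₁, h₂⟩ := matches_inv kd env h
          obtain ⟨rfl, h1⟩ := matches_inv kd env h₁
          simp only [List.nil_append] at hts
          subst hts
          exact Matches.seqn h₁ ((HD _ _).mpr h₂)
      · intro u h
        obtain ⟨ts₁, ts₂, hts, h₁, h₂⟩ := matches_inv kd env h
        rcases List.append_eq_nil_iff.mp hts.symm with ⟨rfl, rfl⟩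
        exact HN _ h₂
  | _, _, Ctx.cons (Layer.followBy s') c, sA, sB, t, HD, HN, ts, w => by
      refine ctx_shift c ?_ ?_ ts w
      · intro ts' u
        constructor
        · intro h
          obtain ⟨ts₁, ts₂, rfl, h₁, h₂⟩ := matches_inv kd env h
          have := Matches.seqn ((HD _ _).mp h₁) h₂
          rw [List.cons_append] at this
          exact this
        · intro h
          obtain ⟨ts₁, ts₂, hts, h₁, h₂⟩ := matches_inv kd env h
          cases ts₁ with
          | nil =>
              simp only [List.nil_append] at hts
              exact absurd h₁ (HN _)
          | cons a l =>
              rw [List.cons_append] at hts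
              injection hts with h1 h2
              subst h1; subst h2
              exact Matches.seqn ((HD _ _).mpr h₁) h₂
      · intro u h
        obtain ⟨ts₁, ts₂, hts, h₁, h₂⟩ := matches_inv kd env h
        rcases List.append_eq_nil_iff.mp hts.symm with ⟨rfl, rfl⟩
        exact HN _ h₁
theorem pierce_correct
    (nullOpt : ∀ {A : Type}, Syn Token Kind Var A → Option A)
    (hnull : ∀ {A : Type} (s : Syn Token Kind Var A), ¬ HasConflict env s →
      ∀ v : A, nullOpt s = some v ↔ Nullable env s v)
    (pierce : ∀ {A B : Type}, Kind → Syn Token Kind Var A → Ctx Token Kind Var A B →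
      Ctx Token Kind Var Token B)
    (hpierce_elem : ∀ {B : Type} (k : Kind) (c : Ctx Token Kind Var Token B),
      pierce k (Syn.elem k) c = c)
    (hpierce_disj₁ : ∀ {A B : Type} (k : Kind) (s₁ s₂ : Syn Token Kind Var A)
      (c : Ctx Token Kind Var A B),
      ¬ HasConflict env (Syn.disj s₁ s₂) → InFirst env k (Syn.disj s₁ s₂) →
      InFirst env k s₁ → pierce k (Syn.disj s₁ s₂) c = pierce k s₁ c)
    (hpierce_disj₂ : ∀ {A B : Type} (k : Kind) (s₁ s₂ : Syn Token Kind Var A)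
      (c : Ctx Token Kind Var A B),
      ¬ HasConflict env (Syn.disj s₁ s₂) → InFirst env k (Syn.disj s₁ s₂) →
      ¬ InFirst env k s₁ → pierce k (Syn.disj s₁ s₂) c = pierce k s₂ c)
    (hpierce_seqn₁ : ∀ {A B C : Type} (k : Kind) (s₁ : Syn Token Kind Var A)
      (s₂ : Syn Token Kind Var B) (c : Ctx Token Kind Var (A × B) C),
      ¬ HasConflict env (Syn.seqn s₁ s₂) → InFirst env k (Syn.seqn s₁ s₂) →
      (nullOpt s₁ = none ∨ InFirst env k s₁) →
      pierce k (Syn.seqn s₁ s₂) c = pierce k s₁ (Ctx.cons (Layer.followBy s₂) c))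
    (hpierce_seqn₂ : ∀ {A B C : Type} (k : Kind) (s₁ : Syn Token Kind Var A)
      (s₂ : Syn Token Kind Var B) (c : Ctx Token Kind Var (A × B) C) (v : A),
      ¬ HasConflict env (Syn.seqn s₁ s₂) → InFirst env k (Syn.seqn s₁ s₂) →
      nullOpt s₁ = some v → ¬ InFirst env k s₁ →
      pierce k (Syn.seqn s₁ s₂) c = pierce k s₂ (Ctx.cons (Layer.prepend v) c))
    (hpierce_map : ∀ {A B C : Type} (k : Kind) (f : A → B) (s : Syn Token Kind Var A)
      (c : Ctx Token Kind Var B C),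
      ¬ HasConflict env (Syn.map f s) → InFirst env k (Syn.map f s) →
      pierce k (Syn.map f s) c = pierce k s (Ctx.cons (Layer.apply f) c))
    (hpierce_var : ∀ {A B : Type} (k : Kind) (x : Var A) (c : Ctx Token Kind Var A B),
      ¬ HasConflict env (Syn.var x : Syn Token Kind Var A) →
      InFirst env k (Syn.var x : Syn Token Kind Var A) →
      pierce k (Syn.var x) c = pierce k (env A x) c)
    (t : Token) {k : Kind} {A : Type} {s : Syn Token Kind Var A}
    (hf : InFirst env k s) :
    ∀ {B : Type} (c : Ctx Token Kind Var A B), k = kd t →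
      ¬ HasConflict env (unfocus s c) →
      ∀ ts v, Matches kd env (unfocus (Syn.eps t) (pierce k s c)) ts v ↔
        Matches kd env (unfocus s c) (t :: ts) v := by
  induction hf with
  | elem k =>
      intro B c hk hC ts v
      subst hk
      rw [hpierce_elem]
      refine ctx_shift kd env c ?_ ?_ ts v
      · intro ts' w
        constructor
        · intro h
          obtain ⟨rfl, rfl⟩ := matches_inv kd env h
          exact Matches.elem rfl
        · intro h
          obtain ⟨h1, h2⟩ := matches_inv kd env h
          injection h1 with h3 h4
          subst h3; subst h4
          exact Matches.eps t
      · intro w h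
        obtain ⟨h1, -⟩ := matches_inv kd env h
        simp at h1
  | disjL hf₁ ih =>
      rename_i A' k s₁ s₂
      intro B c hk hC ts v
      subst hk
      have hCd : ¬ HasConflict env (Syn.disj s₁ s₂) :=
        fun h => hC (conflict_mono env _ c h)
      have hC₁ : ¬ HasConflict env (unfocus s₁ c) :=
        fun h => hC ((sim_unfocus env c (sim_disjL env s₁ s₂)).1 h)
      rw [hpierce_disj₁ _ s₁ s₂ c hCd (InFirst.disjL hf₁) hf₁]
      refine (ih c rfl hC₁ ts v).trans (ctx_ext kd env c hC ?_ ?_ ?_ ?_ ts v)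
      · intro ts' w h; exact Matches.disjL h
      · intro ts' w h
        rcases matches_inv kd env h with h' | h'
        · exact h'
        · exact absurd (HasConflict.disjFF hf₁ (matches_cons_first kd env h' rfl)) hCd
      · intro w h; exact Matches.disjL h
      · intro w h
        rcases matches_inv kd env h with h' | h'
        · exact Or.inl h'
        · exact Or.inr (InSNF.disjFN hf₁ (matches_nil_nullable kd env h' rfl))
  | disjR hf₂ ih =>
      rename_i A' k s₁ s₂
      intro B c hk hC ts v
      subst hk
      have hCd : ¬ HasConflict env (Syn.disj s₁ s₂) :=
        fun h => hC (conflict_mono env _ c h)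
      have hC₂ : ¬ HasConflict env (unfocus s₂ c) :=
        fun h => hC ((sim_unfocus env c (sim_disjR env s₁ s₂)).1 h)
      have hn1 : ¬ InFirst env (kd t) s₁ :=
        fun h1 => hCd (HasConflict.disjFF h1 hf₂)
      rw [hpierce_disj₂ _ s₁ s₂ c hCd (InFirst.disjR hf₂) hn1]
      refine (ih c rfl hC₂ ts v).trans (ctx_ext kd env c hC ?_ ?_ ?_ ?_ ts v)
      · intro ts' w h; exact Matches.disjR h
      · intro ts' w h
        rcases matches_inv kd env h with h' | h'
        · exact absurd (matches_cons_first kd env h' rfl) hn1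
        · exact h'
      · intro w h; exact Matches.disjR h
      · intro w h
        rcases matches_inv kd env h with h' | h'
        · exact Or.inr (InSNF.disjNF (matches_nil_nullable kd env h' rfl) hf₂)
        · exact Or.inl h'
  | seqnL hf₁ hp ih =>
      rename_i A' B' k s₁ s₂
      intro B c hk hC ts v
      have hCs : ¬ HasConflict env (Syn.seqn s₁ s₂) :=
        fun h => hC (conflict_mono env _ c h)
      rw [hpierce_seqn₁ _ s₁ s₂ c hCs (InFirst.seqnL hf₁ hp) (Or.inr hf₁)]
      exact ih (Ctx.cons (Layer.followBy s₂) c) hk hC ts v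
  | seqnR hn₁ hf₂ ih =>
      rename_i A' B' k s₁ s₂ v'
      intro B c hk hC ts v
      subst hk
      have hCs : ¬ HasConflict env (Syn.seqn s₁ s₂) :=
        fun h => hC (conflict_mono env _ c h)
      have hC1 : ¬ HasConflict env s₁ := fun h => hCs (HasConflict.seqnL h)
      have hn : ¬ InFirst env (kd t) s₁ := fun h1 =>
        hCs (HasConflict.seqnSF (first_nullable_snf env h1 _ hn₁) hf₂)
      have hv : nullOpt s₁ = some v' := (hnull s₁ hC1 v').mpr hn₁
      rw [hpierce_seqn₂ _ s₁ s₂ c v' hCs (InFirst.seqnR hn₁ hf₂) hv hn]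
      have hC₂ : ¬ HasConflict env (unfocus s₂ (Ctx.cons (Layer.prepend v') c)) :=
        fun h => hC ((sim_unfocus env c
          (sim_seqn env (sim_eps env hn₁) (sim_refl env s₂))).1 h)
      refine (ih (Ctx.cons (Layer.prepend v') c) rfl hC₂ ts v).trans ?_
      show Matches kd env (unfocus (Syn.seqn (Syn.eps v') s₂) c) (t :: ts) v ↔ _
      refine ctx_ext kd env c hC ?_ ?_ ?_ ?_ ts v
      · intro ts' w h
        obtain ⟨ts₁, ts₂, hts, h₁, h₂⟩ := matches_inv kd env h
        obtain ⟨rfl, h1⟩ := matches_inv kd env h₁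
        simp only [List.nil_append] at hts
        subst hts
        have hm : Matches kd env s₁ [] w.1 := by
          rw [h1]; exact nullable_matches kd env hn₁
        have := Matches.seqn hm h₂
        simpa using this
      · intro ts' w h
        obtain ⟨ts₁, ts₂, hts, h₁, h₂⟩ := matches_inv kd env h
        cases ts₁ with
        | nil =>
            simp only [List.nil_append] at hts
            subst hts
            have h1 : w.1 = v' := by
              have := (hnull s₁ hC1 w.1).mpr (matches_nil_nullable kd env h₁ rfl)
              rw [hv] at this
              exact (Option.some.inj this).symm
            have hm : Matches kd env (Syn.eps v') [] w.1 := by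
              rw [h1]; exact Matches.eps v'
            have := Matches.seqn hm h₂
            simpa using this
        | cons a l =>
            rw [List.cons_append] at hts
            injection hts with h1 h2
            subst h1
            exact absurd (matches_cons_first kd env h₁ rfl) hn
      · intro w h
        obtain ⟨ts₁, ts₂, hts, h₁, h₂⟩ := matches_inv kd env h
        rcases List.append_eq_nil_iff.mp hts.symm with ⟨rfl, rfl⟩
        obtain ⟨-, h1⟩ := matches_inv kd env h₁
        have hm : Matches kd env s₁ [] w.1 := by
          rw [h1]; exact nullable_matches kd env hn₁
        exact Matches.seqn hm h₂
      · intro w h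
        obtain ⟨ts₁, ts₂, hts, h₁, h₂⟩ := matches_inv kd env h
        rcases List.append_eq_nil_iff.mp hts.symm with ⟨rfl, rfl⟩
        have h1 : w.1 = v' := by
          have := (hnull s₁ hC1 w.1).mpr (matches_nil_nullable kd env h₁ rfl)
          rw [hv] at this
          exact (Option.some.inj this).symm
        have hm : Matches kd env (Syn.eps v') [] w.1 := by
          rw [h1]; exact Matches.eps v'
        exact Or.inl (Matches.seqn hm h₂)
  | map f hf ih =>
      rename_i A' B' k s'
      intro B c hk hC ts v
      have hCm : ¬ HasConflict env (Syn.map f s') :=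
        fun h => hC (conflict_mono env _ c h)
      rw [hpierce_map _ f s' c hCm (InFirst.map f hf)]
      exact ih (Ctx.cons (Layer.apply f) c) hk hC ts v
  | var x hf ih =>
      rename_i A' k
      intro B c hk hC ts v
      subst hk
      have hCv : ¬ HasConflict env (Syn.var x : Syn Token Kind Var A') :=
        fun h => hC (conflict_mono env _ c h)
      have hC' : ¬ HasConflict env (unfocus (env A' x) c) :=
        fun h => hC ((sim_unfocus env c (sim_var env x)).1 h)
      rw [hpierce_var _ x c hCv (InFirst.var x hf)]
      refine (ih c rfl hC' ts v).trans (ctx_ext kd env c hC ?_ ?_ ?_ ?_ ts v)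
      · intro ts' w h; exact Matches.var x h
      · intro ts' w h; exact matches_inv kd env h
      · intro w h; exact Matches.var x h
      · intro w h; exact Or.inl (matches_inv kd env h)
def ctxSize : ∀ {A B : Type}, Ctx Token Kind Var A B → Nat
  | _, _, Ctx.nil => 0
  | _, _, Ctx.cons (Layer.followBy _) c => 2 + ctxSize c
  | _, _, Ctx.cons (Layer.apply _) c => 1 + ctxSize c
  | _, _, Ctx.cons (Layer.prepend _) c => 1 + ctxSize c

theorem plug_size : ∀ {A B : Type} (c : Ctx Token Kind Var A B) (v : A),
    ctxSize (plug v c).2.2 ≤ ctxSize c ∧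
      (c.isNil = false → ctxSize (plug v c).2.2 < ctxSize c)
  | _, _, Ctx.nil, v => ⟨le_refl _, by intro h; simp [Ctx.isNil] at h⟩
  | _, _, Ctx.cons (Layer.apply f) c, v => by
      refine ⟨le_trans (plug_size c (f v)).1 ?_, fun _ => ?_⟩
      · simp only [ctxSize]; omega
      · have := (plug_size c (f v)).1
        show ctxSize (plug (f v) c).2.2 < ctxSize (Ctx.cons (Layer.apply f) c)
        simp only [ctxSize]; omega
  | _, _, Ctx.cons (Layer.prepend v') c, v => by
      refine ⟨le_trans (plug_size c (v', v)).1 ?_, fun _ => ?_⟩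
      · simp only [ctxSize]; omega
      · have := (plug_size c (v', v)).1
        show ctxSize (plug (v', v) c).2.2 < ctxSize (Ctx.cons (Layer.prepend v') c)
        simp only [ctxSize]; omega
  | _, _, Ctx.cons (Layer.followBy s') c, v => by
      constructor
      · show ctxSize (Ctx.cons (Layer.prepend v) c) ≤ _
        simp only [ctxSize]; omega
      · intro _
        show ctxSize (Ctx.cons (Layer.prepend v) c) < _
        simp only [ctxSize]; omega

theorem locate_correct
    (nullOpt : ∀ {A : Type}, Syn Token Kind Var A → Option A)
    (hnull : ∀ {A : Type} (s : Syn Token Kind Var A), ¬ HasConflict env s →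
      ∀ v : A, nullOpt s = some v ↔ Nullable env s v)
    (locate : ∀ {B : Type}, Kind → Focused Token Kind Var B →
      Option (Focused Token Kind Var B))
    (hlocate_first : ∀ {A B : Type} (k : Kind) (s : Syn Token Kind Var A)
      (c : Ctx Token Kind Var A B), InFirst env k s →
      locate k (⟨A, s, c⟩ : Focused Token Kind Var B) =
        some (⟨A, s, c⟩ : Focused Token Kind Var B))
    (hlocate_plug : ∀ {A B : Type} (k : Kind) (s : Syn Token Kind Var A)
      (c : Ctx Token Kind Var A B) (v : A),
      ¬ InFirst env k s → nullOpt s = some v → c.isNil = false →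
      locate k (⟨A, s, c⟩ : Focused Token Kind Var B) = locate k (plug v c))
    (hlocate_none₁ : ∀ {A B : Type} (k : Kind) (s : Syn Token Kind Var A)
      (c : Ctx Token Kind Var A B),
      ¬ InFirst env k s → nullOpt s = none →
      locate k (⟨A, s, c⟩ : Focused Token Kind Var B) = none)
    (hlocate_none₂ : ∀ {A : Type} (k : Kind) (s : Syn Token Kind Var A),
      ¬ InFirst env k s →
      locate k (⟨A, s, Ctx.nil⟩ : Focused Token Kind Var A) = none)
    (t : Token) :
    ∀ (n : ℕ) {A B : Type} (s : Syn Token Kind Var A) (c : Ctx Token Kind Var A B),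
      ctxSize c ≤ n → ¬ HasConflict env (unfocus s c) →
      ∀ fs₀ : Focused Token Kind Var B,
      locate (kd t) (⟨A, s, c⟩ : Focused Token Kind Var B) = some fs₀ →
      InFirst env (kd t) fs₀.2.1 ∧ ¬ HasConflict env (unfocusF fs₀) ∧
      ∀ ts w, Matches kd env (unfocusF fs₀) (t :: ts) w ↔
        Matches kd env (unfocus s c) (t :: ts) w := by
  intro n
  induction n using Nat.strong_induction_on with
  | _ n IH =>
  intro A B s c hsize hC fs₀ hloc
  by_cases hf : InFirst env (kd t) s
  · rw [hlocate_first _ s c hf] at hloc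
    obtain rfl := Option.some.inj hloc
    exact ⟨hf, hC, fun ts w => Iff.rfl⟩
  · rcases hno : nullOpt s with - | v
    · rw [hlocate_none₁ _ s c hf hno] at hloc
      simp at hloc
    · cases c with
      | nil =>
          rw [hlocate_none₂ _ s hf] at hloc
          simp at hloc
      | cons l c₀ =>
          have hCs : ¬ HasConflict env s :=
            fun h => hC (conflict_mono env _ _ h)
          have hnul : Nullable env s v := (hnull s hCs v).mp hno
          rw [hlocate_plug (kd t) s (Ctx.cons l c₀) v hf hno (by rfl)] at hloc
          have hsim := plug_sim env (Ctx.cons l c₀) hnul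
          have hsz := (plug_size (Ctx.cons l c₀) v).2 rfl
          rcases hpl : plug v (Ctx.cons l c₀) with ⟨A', s', c'⟩
          rw [hpl] at hloc hsim hsz
          have hC' : ¬ HasConflict env (unfocus s' c') := fun h => hC (hsim.1 h)
          have hn : ctxSize c' < n := lt_of_lt_of_le hsz hsize
          obtain ⟨h1, h2, h3⟩ :=
            IH (ctxSize c') hn s' c' (le_refl _) hC' fs₀ hloc
          refine ⟨h1, h2, fun ts w => (h3 ts w).trans ?_⟩
          have hpm := plug_matches kd env (Ctx.cons l c₀) v
          rw [hpl] at hpm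
          refine Iff.trans (hpm (t :: ts) w) ?_
          show Matches kd env (unfocus (Syn.eps v) (Ctx.cons l c₀)) (t :: ts) w ↔ _
          refine ctx_ext kd env (Ctx.cons l c₀) hC ?_ ?_ ?_ ?_ ts w
          · intro ts' u h
            obtain ⟨h', -⟩ := matches_inv kd env h
            simp at h'
          · intro ts' u h
            exact absurd (matches_cons_first kd env h rfl) hf
          · intro u h
            obtain ⟨-, rfl⟩ := matches_inv kd env h
            exact nullable_matches kd env hnul
          · intro u h
            have hu : u = v := by
              have := (hnull s hCs u).mpr (matches_nil_nullable kd env h rfl)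
              rw [hno] at this
              exact (Option.some.inj this).symm
            subst hu
            exact Or.inl (Matches.eps u)

theorem deriveF_correct
    (nullOpt : ∀ {A : Type}, Syn Token Kind Var A → Option A)
    (hnull : ∀ {A : Type} (s : Syn Token Kind Var A), ¬ HasConflict env s →
      ∀ v : A, nullOpt s = some v ↔ Nullable env s v)
    (locate : ∀ {B : Type}, Kind → Focused Token Kind Var B →
      Option (Focused Token Kind Var B))
    (hlocate_first : ∀ {A B : Type} (k : Kind) (s : Syn Token Kind Var A)
      (c : Ctx Token Kind Var A B), InFirst env k s →
      locate k (⟨A, s, c⟩ : Focused Token Kind Var B) =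
        some (⟨A, s, c⟩ : Focused Token Kind Var B))
    (hlocate_plug : ∀ {A B : Type} (k : Kind) (s : Syn Token Kind Var A)
      (c : Ctx Token Kind Var A B) (v : A),
      ¬ InFirst env k s → nullOpt s = some v → c.isNil = false →
      locate k (⟨A, s, c⟩ : Focused Token Kind Var B) = locate k (plug v c))
    (hlocate_none₁ : ∀ {A B : Type} (k : Kind) (s : Syn Token Kind Var A)
      (c : Ctx Token Kind Var A B),
      ¬ InFirst env k s → nullOpt s = none →
      locate k (⟨A, s, c⟩ : Focused Token Kind Var B) = none)
    (hlocate_none₂ : ∀ {A : Type} (k : Kind) (s : Syn Token Kind Var A),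
      ¬ InFirst env k s →
      locate k (⟨A, s, Ctx.nil⟩ : Focused Token Kind Var A) = none)
    (pierce : ∀ {A B : Type}, Kind → Syn Token Kind Var A → Ctx Token Kind Var A B →
      Ctx Token Kind Var Token B)
    (hpierce_elem : ∀ {B : Type} (k : Kind) (c : Ctx Token Kind Var Token B),
      pierce k (Syn.elem k) c = c)
    (hpierce_disj₁ : ∀ {A B : Type} (k : Kind) (s₁ s₂ : Syn Token Kind Var A)
      (c : Ctx Token Kind Var A B),
      ¬ HasConflict env (Syn.disj s₁ s₂) → InFirst env k (Syn.disj s₁ s₂) →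
      InFirst env k s₁ → pierce k (Syn.disj s₁ s₂) c = pierce k s₁ c)
    (hpierce_disj₂ : ∀ {A B : Type} (k : Kind) (s₁ s₂ : Syn Token Kind Var A)
      (c : Ctx Token Kind Var A B),
      ¬ HasConflict env (Syn.disj s₁ s₂) → InFirst env k (Syn.disj s₁ s₂) →
      ¬ InFirst env k s₁ → pierce k (Syn.disj s₁ s₂) c = pierce k s₂ c)
    (hpierce_seqn₁ : ∀ {A B C : Type} (k : Kind) (s₁ : Syn Token Kind Var A)
      (s₂ : Syn Token Kind Var B) (c : Ctx Token Kind Var (A × B) C),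
      ¬ HasConflict env (Syn.seqn s₁ s₂) → InFirst env k (Syn.seqn s₁ s₂) →
      (nullOpt s₁ = none ∨ InFirst env k s₁) →
      pierce k (Syn.seqn s₁ s₂) c = pierce k s₁ (Ctx.cons (Layer.followBy s₂) c))
    (hpierce_seqn₂ : ∀ {A B C : Type} (k : Kind) (s₁ : Syn Token Kind Var A)
      (s₂ : Syn Token Kind Var B) (c : Ctx Token Kind Var (A × B) C) (v : A),
      ¬ HasConflict env (Syn.seqn s₁ s₂) → InFirst env k (Syn.seqn s₁ s₂) →
      nullOpt s₁ = some v → ¬ InFirst env k s₁ →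
      pierce k (Syn.seqn s₁ s₂) c = pierce k s₂ (Ctx.cons (Layer.prepend v) c))
    (hpierce_map : ∀ {A B C : Type} (k : Kind) (f : A → B) (s : Syn Token Kind Var A)
      (c : Ctx Token Kind Var B C),
      ¬ HasConflict env (Syn.map f s) → InFirst env k (Syn.map f s) →
      pierce k (Syn.map f s) c = pierce k s (Ctx.cons (Layer.apply f) c))
    (hpierce_var : ∀ {A B : Type} (k : Kind) (x : Var A) (c : Ctx Token Kind Var A B),
      ¬ HasConflict env (Syn.var x : Syn Token Kind Var A) →
      InFirst env k (Syn.var x : Syn Token Kind Var A) →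
      pierce k (Syn.var x) c = pierce k (env A x) c)
    (deriveF : ∀ {B : Type}, Token → Focused Token Kind Var B →
      Option (Focused Token Kind Var B))
    (hderiveF_none : ∀ {B : Type} (t : Token) (fs : Focused Token Kind Var B),
      locate (kd t) fs = none → deriveF t fs = none)
    (hderiveF_some : ∀ {B : Type} (t : Token) (fs fs' : Focused Token Kind Var B),
      locate (kd t) fs = some fs' →
      deriveF t fs =
        some (⟨Token, Syn.eps t, pierce (kd t) fs'.2.1 fs'.2.2⟩ : Focused Token Kind Var B))
    {A B : Type} (s : Syn Token Kind Var A) (c : Ctx Token Kind Var A B) (t : Token)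
    (hll1 : ¬ HasConflict env (unfocus s c)) (fs' : Focused Token Kind Var B)
    (h : deriveF t (⟨A, s, c⟩ : Focused Token Kind Var B) = some fs')
    (ts : List Token) (v : B) :
    Matches kd env (unfocusF fs') ts v ↔ Matches kd env (unfocus s c) (t :: ts) v := by

  cases hloc : locate (kd t) (⟨A, s, c⟩ : Focused Token Kind Var B) with
  | none =>
      rw [hderiveF_none t _ hloc] at h
      exact absurd h (by simp)
  | some fs₀ =>
      obtain ⟨hfirst, hconf, hequiv⟩ :=
        locate_correct kd env nullOpt hnull locate hlocate_first hlocate_plug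
          hlocate_none₁ hlocate_none₂ t (ctxSize c) s c (le_refl _) hll1 fs₀ hloc
      obtain ⟨A₀, s₀, c₀⟩ := fs₀
      rw [hderiveF_some t _ _ hloc] at h
      obtain rfl := Option.some.inj h
      show Matches kd env (unfocus (Syn.eps t) (pierce (kd t) s₀ c₀)) ts v ↔ _
      exact (pierce_correct kd env nullOpt hnull pierce hpierce_elem hpierce_disj₁
        hpierce_disj₂ hpierce_seqn₁ hpierce_seqn₂ hpierce_map hpierce_var t hfirst
        c₀ rfl hconf ts v).trans (hequiv ts v)

end
end

section
/- Correctness of result: for every LL(1) focused syntax (s, c), result (s, c) = nullable? (unfocus (s, c)), i.e. result returns exactly the value that the unfocused syntax associates with the empty token sequence, if any. -/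
set_option autoImplicit false

section

variable {Token Kind : Type} {Var : Type → Type}
variable (kd : Token → Kind) (env : ∀ A : Type, Var A → Syn Token Kind Var A)

/-! ### Auxiliary lemmas -/


/-- Recursive unfolding of `Nullable` (only meaningful on the shapes we invert). -/
def NullF : ∀ {A : Type}, Syn Token Kind Var A → A → Prop
  | _, Syn.eps v, u => u = v
  | _, Syn.seqn s₁ s₂, u => Nullable env s₁ u.1 ∧ Nullable env s₂ u.2
  | _, Syn.map f s, u => ∃ w, Nullable env s w ∧ u = f w
  | _, _, _ => True

lemma null_toF {A : Type} {s : Syn Token Kind Var A} {u : A} (h : Nullable env s u) :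
    NullF env s u := by
  cases h with
  | eps v => exact rfl
  | seqn h1 h2 => exact ⟨h1, h2⟩
  | map f h => exact ⟨_, h, rfl⟩
  | disjL h => trivial
  | disjR h => trivial
  | var x h => trivial

def ProdF : ∀ {A : Type}, Syn Token Kind Var A → Prop
  | _, Syn.seqn s₁ s₂ => Productive env s₁ ∧ Productive env s₂
  | _, Syn.map _ s => Productive env s
  | _, _ => True

lemma prod_toF {A : Type} {s : Syn Token Kind Var A} (h : Productive env s) :
    ProdF env s := by
  cases h with
  | seqn h1 h2 => exact ⟨h1, h2⟩
  | map f h => exact h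
  | eps v => trivial
  | elem k => trivial
  | disjL h => trivial
  | disjR h => trivial
  | var x h => trivial

def FirstF (k : Kind) : ∀ {A : Type}, Syn Token Kind Var A → Prop
  | _, Syn.eps _ => False
  | _, Syn.seqn s₁ s₂ =>
      (InFirst env k s₁ ∧ Productive env s₂) ∨ ((∃ v, Nullable env s₁ v) ∧ InFirst env k s₂)
  | _, Syn.map _ s => InFirst env k s
  | _, _ => True

lemma first_toF {A : Type} {k : Kind} {s : Syn Token Kind Var A} (h : InFirst env k s) :
    FirstF env k s := by
  cases h with
  | elem k => trivial
  | seqnL h1 h2 => exact Or.inl ⟨h1, h2⟩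
  | seqnR h1 h2 => exact Or.inr ⟨⟨_, h1⟩, h2⟩
  | map f h => exact h
  | disjL h => trivial
  | disjR h => trivial
  | var x h => trivial

def SnfF (k : Kind) : ∀ {A : Type}, Syn Token Kind Var A → Prop
  | _, Syn.eps _ => False
  | _, Syn.seqn s₁ s₂ =>
      (InSNF env k s₁ ∧ ∃ v, Nullable env s₂ v) ∨ (Productive env s₁ ∧ InSNF env k s₂)
  | _, Syn.map _ s => InSNF env k s
  | _, _ => True

lemma snf_toF {A : Type} {k : Kind} {s : Syn Token Kind Var A} (h : InSNF env k s) :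
    SnfF env k s := by
  cases h with
  | seqnL h1 h2 => exact Or.inl ⟨h1, _, h2⟩
  | seqnR h1 h2 => exact Or.inr ⟨h1, h2⟩
  | map f h => exact h
  | disjL h => trivial
  | disjR h => trivial
  | disjFN h1 h2 => trivial
  | disjNF h1 h2 => trivial
  | var x h => trivial

def ConfF : ∀ {A : Type}, Syn Token Kind Var A → Prop
  | _, Syn.eps _ => False
  | _, Syn.seqn s₁ s₂ =>
      (∃ k, InSNF env k s₁ ∧ InFirst env k s₂) ∨ HasConflict env s₁ ∨ HasConflict env s₂
  | _, Syn.map _ s => HasConflict env s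
  | _, _ => True

lemma conf_toF {A : Type} {s : Syn Token Kind Var A} (h : HasConflict env s) :
    ConfF env s := by
  cases h with
  | seqnSF h1 h2 => exact Or.inl ⟨_, h1, h2⟩
  | seqnL h => exact Or.inr (Or.inl h)
  | seqnR h => exact Or.inr (Or.inr h)
  | map f h => exact h
  | disjNN h1 h2 => trivial
  | disjFF h1 h2 => trivial
  | disjL h => trivial
  | disjR h => trivial
  | var x h => trivial


lemma null_eps_inv {A : Type} {v u : A} (h : Nullable env (Syn.eps v) u) : u = v := by
  cases h; rfl

lemma null_map_inv {A B : Type} {f : A → B} {s : Syn Token Kind Var A} {u : B}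
    (h : Nullable env (Syn.map f s) u) : ∃ w, Nullable env s w ∧ u = f w := by
  cases h with
  | map _ hh => exact ⟨_, hh, rfl⟩

lemma null_seqn_inv {A B : Type} {s₁ : Syn Token Kind Var A} {s₂ : Syn Token Kind Var B}
    {u : A × B} (h : Nullable env (Syn.seqn s₁ s₂) u) :
    Nullable env s₁ u.1 ∧ Nullable env s₂ u.2 :=
  null_toF env h

lemma null_prod {A : Type} {s : Syn Token Kind Var A} {v : A} (h : Nullable env s v) :
    Productive env s := by
  induction h with
  | eps v => exact .eps v
  | disjL _ ih => exact .disjL ih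
  | disjR _ ih => exact .disjR ih
  | seqn _ _ ih1 ih2 => exact .seqn ih1 ih2
  | map f _ ih => exact .map f ih
  | var x _ ih => exact .var x ih

lemma null_unique : ∀ {A : Type} {s : Syn Token Kind Var A} {v₁ : A},
    Nullable env s v₁ → ∀ {v₂ : A}, ¬ HasConflict env s → Nullable env s v₂ → v₁ = v₂ := by
  intro A s v₁ h1
  induction h1 with
  | eps v => intro v₂ hc h2; exact (null_eps_inv env h2).symm
  | disjL h ih =>
    intro v₂ hc h2
    cases h2 with
    | disjL h2 => exact ih (fun hcc => hc (.disjL hcc)) h2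
    | disjR h2 => exact absurd (HasConflict.disjNN h h2) hc
  | disjR h ih =>
    intro v₂ hc h2
    cases h2 with
    | disjL h2 => exact absurd (HasConflict.disjNN h2 h) hc
    | disjR h2 => exact ih (fun hcc => hc (.disjR hcc)) h2
  | seqn h1 h2 ih1 ih2 =>
    intro v₂ hc hh
    obtain ⟨ha, hb⟩ := null_seqn_inv env hh
    obtain ⟨x, y⟩ := v₂
    exact Prod.ext (ih1 (fun hcc => hc (.seqnL hcc)) ha) (ih2 (fun hcc => hc (.seqnR hcc)) hb)
  | map f h ih =>
    intro v₂ hc hh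
    obtain ⟨w, hw, rfl⟩ := null_map_inv env hh
    rw [ih (fun hcc => hc (.map f hcc)) hw]
  | var x h ih =>
    intro v₂ hc hh
    cases hh with
    | var _ hh => exact ih (fun hcc => hc (.var x hcc)) hh

lemma prod_map_inv {A B : Type} {f : A → B} {s : Syn Token Kind Var A}
    (h : Productive env (Syn.map f s)) : Productive env s := by
  cases h with
  | map _ hh => exact hh

lemma prod_seqn_inv {A B : Type} {s₁ : Syn Token Kind Var A} {s₂ : Syn Token Kind Var B}
    (h : Productive env (Syn.seqn s₁ s₂)) : Productive env s₁ ∧ Productive env s₂ :=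
  prod_toF env h

lemma first_eps_inv {A : Type} {v : A} {k : Kind} (h : InFirst env k (Syn.eps v)) : False := by
  cases h

lemma first_map_inv {A B : Type} {f : A → B} {s : Syn Token Kind Var A} {k : Kind}
    (h : InFirst env k (Syn.map f s)) : InFirst env k s := by
  cases h with
  | map _ hh => exact hh

lemma first_seqn_inv {A B : Type} {s₁ : Syn Token Kind Var A} {s₂ : Syn Token Kind Var B}
    {k : Kind} (h : InFirst env k (Syn.seqn s₁ s₂)) :
    (InFirst env k s₁ ∧ Productive env s₂) ∨ ((∃ v, Nullable env s₁ v) ∧ InFirst env k s₂) :=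
  first_toF env h

lemma snf_eps_inv {A : Type} {v : A} {k : Kind} (h : InSNF env k (Syn.eps v)) : False := by
  cases h

lemma snf_map_inv {A B : Type} {f : A → B} {s : Syn Token Kind Var A} {k : Kind}
    (h : InSNF env k (Syn.map f s)) : InSNF env k s := by
  cases h with
  | map _ hh => exact hh

lemma snf_seqn_inv {A B : Type} {s₁ : Syn Token Kind Var A} {s₂ : Syn Token Kind Var B}
    {k : Kind} (h : InSNF env k (Syn.seqn s₁ s₂)) :
    (InSNF env k s₁ ∧ ∃ v, Nullable env s₂ v) ∨ (Productive env s₁ ∧ InSNF env k s₂) :=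
  snf_toF env h

lemma conf_eps_inv {A : Type} {v : A} (h : HasConflict env (Syn.eps v)) : False := by
  cases h

lemma conf_map_inv {A B : Type} {f : A → B} {s : Syn Token Kind Var A}
    (h : HasConflict env (Syn.map f s)) : HasConflict env s := by
  cases h with
  | map _ hh => exact hh

lemma conf_seqn_inv {A B : Type} {s₁ : Syn Token Kind Var A} {s₂ : Syn Token Kind Var B}
    (h : HasConflict env (Syn.seqn s₁ s₂)) :
    (∃ k, InSNF env k s₁ ∧ InFirst env k s₂) ∨ HasConflict env s₁ ∨ HasConflict env s₂ :=
  conf_toF env h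

/-- A simulation relation sufficient to carry conflict-freeness and nullability
through contexts. -/
structure SRel {A : Type} (a b : Syn Token Kind Var A) : Prop where
  nullIff : ∀ v, Nullable env a v ↔ Nullable env b v
  prodIff : Productive env a ↔ Productive env b
  firstSub : ∀ k, InFirst env k a → InFirst env k b
  snfSub : ∀ k, InSNF env k a → InSNF env k b
  confImp : HasConflict env a → HasConflict env b

lemma srel_map {A B : Type} (f : A → B) {a b : Syn Token Kind Var A} (r : SRel env a b) :
    SRel env (Syn.map f a) (Syn.map f b) where
  nullIff v := by
    constructor
    · intro h
      obtain ⟨w, hw, rfl⟩ := null_map_inv env h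
      exact .map f ((r.nullIff w).mp hw)
    · intro h
      obtain ⟨w, hw, rfl⟩ := null_map_inv env h
      exact .map f ((r.nullIff w).mpr hw)
  prodIff := ⟨fun h => .map f (r.prodIff.mp (prod_map_inv env h)),
    fun h => .map f (r.prodIff.mpr (prod_map_inv env h))⟩
  firstSub k h := .map f (r.firstSub k (first_map_inv env h))
  snfSub k h := .map f (r.snfSub k (snf_map_inv env h))
  confImp h := .map f (r.confImp (conf_map_inv env h))

lemma srel_prepend {A C : Type} (v : C) {a b : Syn Token Kind Var A} (r : SRel env a b) :
    SRel env (Syn.seqn (Syn.eps v) a) (Syn.seqn (Syn.eps v) b) where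
  nullIff u := by
    obtain ⟨x, y⟩ := u
    constructor
    · intro h
      obtain ⟨h1, h2⟩ := null_seqn_inv env h
      exact .seqn h1 ((r.nullIff y).mp h2)
    · intro h
      obtain ⟨h1, h2⟩ := null_seqn_inv env h
      exact .seqn h1 ((r.nullIff y).mpr h2)
  prodIff := by
    constructor
    · intro h
      exact .seqn (.eps v) (r.prodIff.mp (prod_seqn_inv env h).2)
    · intro h
      exact .seqn (.eps v) (r.prodIff.mpr (prod_seqn_inv env h).2)
  firstSub k h := by
    rcases first_seqn_inv env h with ⟨h1, _⟩ | ⟨⟨w, hw⟩, h2⟩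
    · exact absurd h1 (first_eps_inv env)
    · exact .seqnR hw (r.firstSub k h2)
  snfSub k h := by
    rcases snf_seqn_inv env h with ⟨h1, _⟩ | ⟨h1, h2⟩
    · exact absurd h1 (snf_eps_inv env)
    · exact .seqnR h1 (r.snfSub k h2)
  confImp h := by
    rcases conf_seqn_inv env h with ⟨k, h1, _⟩ | h1 | h1
    · exact absurd h1 (snf_eps_inv env)
    · exact absurd h1 (conf_eps_inv env)
    · exact .seqnR (r.confImp h1)

lemma srel_follow {A C : Type} (s' : Syn Token Kind Var C) {a b : Syn Token Kind Var A}
    (r : SRel env a b) : SRel env (Syn.seqn a s') (Syn.seqn b s') where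
  nullIff u := by
    obtain ⟨x, y⟩ := u
    constructor
    · intro h
      obtain ⟨h1, h2⟩ := null_seqn_inv env h
      exact .seqn ((r.nullIff x).mp h1) h2
    · intro h
      obtain ⟨h1, h2⟩ := null_seqn_inv env h
      exact .seqn ((r.nullIff x).mpr h1) h2
  prodIff := by
    constructor
    · intro h
      obtain ⟨h1, h2⟩ := prod_seqn_inv env h
      exact .seqn (r.prodIff.mp h1) h2
    · intro h
      obtain ⟨h1, h2⟩ := prod_seqn_inv env h
      exact .seqn (r.prodIff.mpr h1) h2
  firstSub k h := by
    rcases first_seqn_inv env h with ⟨h1, h2⟩ | ⟨⟨w, hw⟩, h2⟩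
    · exact .seqnL (r.firstSub k h1) h2
    · exact .seqnR ((r.nullIff w).mp hw) h2
  snfSub k h := by
    rcases snf_seqn_inv env h with ⟨h1, w, hw⟩ | ⟨h1, h2⟩
    · exact .seqnL (r.snfSub k h1) hw
    · exact .seqnR (r.prodIff.mp h1) h2
  confImp h := by
    rcases conf_seqn_inv env h with ⟨k, h1, h2⟩ | h1 | h1
    · exact .seqnSF (r.snfSub k h1) h2
    · exact .seqnL (r.confImp h1)
    · exact .seqnR h1

lemma srel_unfocus : ∀ {A B : Type} (c : Ctx Token Kind Var A B) {a b : Syn Token Kind Var A},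
    SRel env a b → SRel env (unfocus a c) (unfocus b c) := by
  intro A B c
  induction c with
  | nil => intro a b r; exact r
  | cons l c ih =>
    intro a b r
    cases l with
    | apply f => exact ih (srel_map env f r)
    | prepend v => exact ih (srel_prepend env v r)
    | followBy s' => exact ih (srel_follow env s' r)

lemma conf_unfocus : ∀ {A B : Type} (c : Ctx Token Kind Var A B) {a : Syn Token Kind Var A},
    HasConflict env a → HasConflict env (unfocus a c) := by
  intro A B c
  induction c with
  | nil => intro a h; exact h
  | cons l c ih =>
    intro a h
    cases l with
    | apply f => exact ih (.map f h)
    | prepend v => exact ih (.seqnR h)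
    | followBy s' => exact ih (.seqnL h)

lemma null_unfocus_inv : ∀ {A B : Type} (c : Ctx Token Kind Var A B)
    {a : Syn Token Kind Var A} {w : B},
    Nullable env (unfocus a c) w → ∃ v, Nullable env a v := by
  intro A B c
  induction c with
  | nil => intro a w h; exact ⟨w, h⟩
  | cons l c ih =>
    intro a w h
    cases l with
    | apply f =>
      obtain ⟨v, hv⟩ := ih h
      obtain ⟨u, hu, _⟩ := null_map_inv env hv
      exact ⟨u, hu⟩
    | prepend v' =>
      obtain ⟨v, hv⟩ := ih h
      exact ⟨v.2, (null_seqn_inv env hv).2⟩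
    | followBy s' =>
      obtain ⟨v, hv⟩ := ih h
      exact ⟨v.1, (null_seqn_inv env hv).1⟩

lemma srel_eps_map {A B : Type} (f : A → B) (v : A) :
    SRel env (Syn.eps (f v)) (Syn.map f (Syn.eps v)) where
  nullIff u := by
    constructor
    · intro h
      rw [null_eps_inv env h]
      exact .map f (.eps v)
    · intro h
      obtain ⟨w, hw, rfl⟩ := null_map_inv env h
      rw [null_eps_inv env hw]
      exact .eps _
  prodIff := iff_of_true (.eps _) (.map f (.eps v))
  firstSub k h := absurd h (first_eps_inv env)
  snfSub k h := absurd h (snf_eps_inv env)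
  confImp h := absurd h (conf_eps_inv env)

lemma srel_eps_pair {A C : Type} (v' : C) (v : A) :
    SRel env (Syn.eps (v', v)) (Syn.seqn (Syn.eps v') (Syn.eps v)) where
  nullIff u := by
    obtain ⟨x, y⟩ := u
    constructor
    · intro h
      have h' := null_eps_inv env h
      obtain rfl : x = v' := congrArg Prod.fst h'
      obtain rfl : y = v := congrArg Prod.snd h'
      exact .seqn (.eps _) (.eps _)
    · intro h
      obtain ⟨h1, h2⟩ := null_seqn_inv env h
      obtain rfl : x = v' := null_eps_inv env h1
      obtain rfl : y = v := null_eps_inv env h2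
      exact .eps _
  prodIff := iff_of_true (.eps _) (.seqn (.eps v') (.eps v))
  firstSub k h := absurd h (first_eps_inv env)
  snfSub k h := absurd h (snf_eps_inv env)
  confImp h := absurd h (conf_eps_inv env)

lemma srel_eps_of_null {A : Type} {s : Syn Token Kind Var A} {v : A}
    (hc : ¬ HasConflict env s) (hv : Nullable env s v) : SRel env (Syn.eps v) s where
  nullIff u := by
    constructor
    · intro h
      rw [null_eps_inv env h]
      exact hv
    · intro h
      rw [null_unique env h hc hv]
      exact .eps _
  prodIff := iff_of_true (.eps _) (null_prod env hv)
  firstSub k h := absurd h (first_eps_inv env)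
  snfSub k h := absurd h (snf_eps_inv env)
  confImp h := absurd h (conf_eps_inv env)

lemma srel_eps_seqn {A C : Type} {s' : Syn Token Kind Var C} {w : C}
    (hc : ¬ HasConflict env s') (hw : Nullable env s' w) (v : A) :
    SRel env (Syn.eps (v, w)) (Syn.seqn (Syn.eps v) s') where
  nullIff u := by
    obtain ⟨x, y⟩ := u
    constructor
    · intro h
      have h' := null_eps_inv env h
      obtain rfl : x = v := congrArg Prod.fst h'
      obtain rfl : y = w := congrArg Prod.snd h'
      exact .seqn (.eps _) hw
    · intro h
      obtain ⟨h1, h2⟩ := null_seqn_inv env h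
      obtain rfl : x = v := null_eps_inv env h1
      obtain rfl : y = w := (null_unique env h2 hc hw)
      exact .eps _
  prodIff := iff_of_true (.eps _) (.seqn (.eps v) (null_prod env hw))
  firstSub k h := absurd h (first_eps_inv env)
  snfSub k h := absurd h (snf_eps_inv env)
  confImp h := absurd h (conf_eps_inv env)

lemma nullOpt_eq_of_srel (nullOpt : ∀ {A : Type}, Syn Token Kind Var A → Option A)
    (hnull : ∀ {A : Type} (s : Syn Token Kind Var A), ¬ HasConflict env s →
      ∀ v : A, nullOpt s = some v ↔ Nullable env s v)
    {A : Type} {a b : Syn Token Kind Var A} (r : SRel env a b)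
    (hb : ¬ HasConflict env b) : nullOpt a = nullOpt b := by
  have ha : ¬ HasConflict env a := fun h => hb (r.confImp h)
  cases heq : nullOpt a with
  | some v =>
    exact ((hnull b hb v).mpr ((r.nullIff v).mp ((hnull a ha v).mp heq))).symm
  | none =>
    cases heq2 : nullOpt b with
    | none => rfl
    | some v =>
      have := (hnull a ha v).mpr ((r.nullIff v).mpr ((hnull b hb v).mp heq2))
      rw [heq] at this
      cases this

lemma nullOpt_none_unfocus (nullOpt : ∀ {A : Type}, Syn Token Kind Var A → Option A)
    (hnull : ∀ {A : Type} (s : Syn Token Kind Var A), ¬ HasConflict env s →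
      ∀ v : A, nullOpt s = some v ↔ Nullable env s v)
    {A B : Type} (c : Ctx Token Kind Var A B) (a : Syn Token Kind Var A)
    (hc : ¬ HasConflict env (unfocus a c)) (h : nullOpt a = none) :
    nullOpt (unfocus a c) = none := by
  cases heq : nullOpt (unfocus a c) with
  | none => rfl
  | some w =>
    obtain ⟨v, hv⟩ := null_unfocus_inv env c ((hnull _ hc w).mp heq)
    have hca : ¬ HasConflict env a := fun hcc => hc (conf_unfocus env c hcc)
    rw [(hnull a hca v).mpr hv] at h
    cases h

lemma plug_correct
    (nullOpt : ∀ {A : Type}, Syn Token Kind Var A → Option A)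
    (hnull : ∀ {A : Type} (s : Syn Token Kind Var A), ¬ HasConflict env s →
      ∀ v : A, nullOpt s = some v ↔ Nullable env s v)
    (result : ∀ {B : Type}, Focused Token Kind Var B → Option B)
    (hresult_none : ∀ {A B : Type} (s : Syn Token Kind Var A) (c : Ctx Token Kind Var A B),
      nullOpt s = none → result (⟨A, s, c⟩ : Focused Token Kind Var B) = none)
    (hresult_nil : ∀ {A : Type} (s : Syn Token Kind Var A) (v : A),
      nullOpt s = some v → result (⟨A, s, Ctx.nil⟩ : Focused Token Kind Var A) = some v)
    (hresult_plug : ∀ {A B : Type} (s : Syn Token Kind Var A) (c : Ctx Token Kind Var A B)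
      (v : A), nullOpt s = some v → c.isNil = false →
      result (⟨A, s, c⟩ : Focused Token Kind Var B) = result (plug v c)) :
    ∀ {A B : Type} (c : Ctx Token Kind Var A B) (v : A),
      ¬ HasConflict env (unfocus (Syn.eps v) c) →
      result (plug v c) = nullOpt (unfocus (Syn.eps v) c) := by
  intro A B c
  induction c with
  | nil =>
    intro v hc
    have hne : nullOpt (Syn.eps v) = some v :=
      (hnull _ (fun h => conf_eps_inv env h) v).mpr (.eps v)
    show result ⟨_, Syn.eps v, Ctx.nil⟩ = nullOpt (Syn.eps v)
    rw [hresult_nil _ v hne, hne]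
  | cons l c ih =>
    cases l with
    | apply f =>
      intro v hc
      have r' := srel_unfocus env c (srel_eps_map env f v)
      have hc' : ¬ HasConflict env (unfocus (Syn.eps (f v)) c) := fun h => hc (r'.confImp h)
      show result (plug (f v) c) = nullOpt (unfocus (Syn.map f (Syn.eps v)) c)
      rw [ih (f v) hc']
      exact nullOpt_eq_of_srel env nullOpt hnull r' hc
    | prepend v' =>
      intro v hc
      have r' := srel_unfocus env c (srel_eps_pair env v' v)
      have hc' : ¬ HasConflict env (unfocus (Syn.eps (v', v)) c) := fun h => hc (r'.confImp h)
      show result (plug (v', v) c) = nullOpt (unfocus (Syn.seqn (Syn.eps v') (Syn.eps v)) c)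
      rw [ih (v', v) hc']
      exact nullOpt_eq_of_srel env nullOpt hnull r' hc
    | followBy s' =>
      intro v hc
      have hcs : ¬ HasConflict env (Syn.seqn (Syn.eps v) s') :=
        fun h => hc (conf_unfocus env c h)
      have hcs' : ¬ HasConflict env s' := fun h => hcs (.seqnR h)
      show result ⟨_, s', Ctx.cons (Layer.prepend v) c⟩ =
        nullOpt (unfocus (Syn.seqn (Syn.eps v) s') c)
      cases heq : nullOpt s' with
      | none =>
        rw [hresult_none s' _ heq]
        have hsn : nullOpt (Syn.seqn (Syn.eps v) s') = none := by
          cases heq2 : nullOpt (Syn.seqn (Syn.eps v) s') with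
          | none => rfl
          | some u =>
            have h2 := (null_seqn_inv env ((hnull _ hcs u).mp heq2)).2
            rw [(hnull s' hcs' u.2).mpr h2] at heq
            cases heq
        rw [nullOpt_none_unfocus env nullOpt hnull c _ hc hsn]
      | some w =>
        have hw : Nullable env s' w := (hnull s' hcs' w).mp heq
        rw [hresult_plug s' (Ctx.cons (Layer.prepend v) c) w heq rfl]
        have r' := srel_unfocus env c (srel_eps_seqn env hcs' hw v)
        have hc' : ¬ HasConflict env (unfocus (Syn.eps (v, w)) c) := fun h => hc (r'.confImp h)
        show result (plug (v, w) c) = _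
        rw [ih (v, w) hc']
        exact nullOpt_eq_of_srel env nullOpt hnull r' hc


theorem result_correct
    (nullOpt : ∀ {A : Type}, Syn Token Kind Var A → Option A)
    (hnull : ∀ {A : Type} (s : Syn Token Kind Var A), ¬ HasConflict env s →
      ∀ v : A, nullOpt s = some v ↔ Nullable env s v)
    (result : ∀ {B : Type}, Focused Token Kind Var B → Option B)
    (hresult_none : ∀ {A B : Type} (s : Syn Token Kind Var A) (c : Ctx Token Kind Var A B),
      nullOpt s = none → result (⟨A, s, c⟩ : Focused Token Kind Var B) = none)
    (hresult_nil : ∀ {A : Type} (s : Syn Token Kind Var A) (v : A),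
      nullOpt s = some v → result (⟨A, s, Ctx.nil⟩ : Focused Token Kind Var A) = some v)
    (hresult_plug : ∀ {A B : Type} (s : Syn Token Kind Var A) (c : Ctx Token Kind Var A B)
      (v : A), nullOpt s = some v → c.isNil = false →
      result (⟨A, s, c⟩ : Focused Token Kind Var B) = result (plug v c))
    {A B : Type} (s : Syn Token Kind Var A) (c : Ctx Token Kind Var A B)
    (hll1 : ¬ HasConflict env (unfocus s c)) :
    result (⟨A, s, c⟩ : Focused Token Kind Var B) = nullOpt (unfocus s c) := by
  have hcs : ¬ HasConflict env s := fun h => hll1 (conf_unfocus env c h)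
  cases heq : nullOpt s with
  | none =>
    rw [hresult_none s c heq, nullOpt_none_unfocus env nullOpt hnull c s hll1 heq]
  | some v =>
    have hv : Nullable env s v := (hnull s hcs v).mp heq
    cases c with
    | nil =>
      rw [hresult_nil s v heq]
      exact heq.symm
    | cons l c' =>
      rw [hresult_plug s (Ctx.cons l c') v heq rfl]
      have r' := srel_unfocus env (Ctx.cons l c') (srel_eps_of_null env hcs hv)
      have hc' : ¬ HasConflict env (unfocus (Syn.eps v) (Ctx.cons l c')) :=
        fun h => hll1 (r'.confImp h)
      rw [plug_correct env nullOpt hnull result hresult_none hresult_nil hresult_plug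
        (Ctx.cons l c') v hc']
      exact nullOpt_eq_of_srel env nullOpt hnull r' hll1


end
end

section
/- Unambiguity of LL(1) syntaxes: for every LL(1) syntax s : Syntax A (i.e. ¬HasConflict s), every token sequence ts, and all values v₁, v₂ : A, if Matches s ts v₁ and Matches s ts v₂ then v₁ = v₂. -/
set_option autoImplicit false

namespace LL1U

section
variable {Token Kind : Type} {Var : Type → Type}
variable {kd : Token → Kind} {env : ∀ A : Type, Var A → Syn Token Kind Var A}

theorem matches_productive : ∀ {A : Type} {s : Syn Token Kind Var A} {ts : List Token} {v : A},
    Matches kd env s ts v → Productive env s := by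
  intro A s ts v h
  induction h with
  | elem h => exact .elem _
  | eps v => exact .eps v
  | disjL _ ih => exact .disjL ih
  | disjR _ ih => exact .disjR ih
  | seqn _ _ ih1 ih2 => exact .seqn ih1 ih2
  | map f _ ih => exact .map f ih
  | var x _ ih => exact .var x ih

theorem matches_nil_nullable : ∀ {A : Type} {s : Syn Token Kind Var A} {ts : List Token} {v : A},
    Matches kd env s ts v → ts = [] → Nullable env s v := by
  intro A s ts v h
  induction h with
  | elem h => intro he; cases he
  | eps v => intro _; exact .eps v
  | disjL _ ih => intro he; exact .disjL (ih he)
  | disjR _ ih => intro he; exact .disjR (ih he)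
  | seqn _ _ ih1 ih2 =>
      intro he
      rcases List.append_eq_nil_iff.mp he with ⟨h1, h2⟩
      exact .seqn (ih1 h1) (ih2 h2)
  | map f _ ih => intro he; exact .map f (ih he)
  | var x _ ih => intro he; exact .var x (ih he)

theorem matches_cons_first : ∀ {A : Type} {s : Syn Token Kind Var A} {ts : List Token} {v : A},
    Matches kd env s ts v → ∀ (t : Token) (ts' : List Token), ts = t :: ts' →
      InFirst env (kd t) s := by
  intro A s ts v h
  induction h with
  | @elem k t0 h =>
      intro t ts' he
      injection he with h1 h2
      subst h1
      rw [h]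
      exact .elem k
  | eps v => intro t ts' he; cases he
  | disjL _ ih => intro t ts' he; exact .disjL (ih t ts' he)
  | disjR _ ih => intro t ts' he; exact .disjR (ih t ts' he)
  | @seqn A B s₁ s₂ ts₁ ts₂ v₁ v₂ h1 h2 ih1 ih2 =>
      intro t ts' he
      cases ts₁ with
      | nil => exact .seqnR (matches_nil_nullable h1 rfl) (ih2 t ts' he)
      | cons a r =>
          injection he with h1' h2'
          subst h1'
          exact .seqnL (ih1 _ r rfl) (matches_productive h2)
  | map f _ ih => intro t ts' he; exact .map f (ih t ts' he)
  | var x _ ih => intro t ts' he; exact .var x (ih t ts' he)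

/-- Statement of the inversion principle, by cases on the syntax. -/
def InvStmt (kd : Token → Kind) (env : ∀ A : Type, Var A → Syn Token Kind Var A) :
    ∀ {A : Type}, Syn Token Kind Var A → List Token → A → Prop
  | _, Syn.elem k, ts, v => ts = [v] ∧ kd v = k
  | _, Syn.fail, _, _ => False
  | _, Syn.eps v0, ts, v => ts = [] ∧ v = v0
  | _, Syn.disj s₁ s₂, ts, v => Matches kd env s₁ ts v ∨ Matches kd env s₂ ts v
  | _, Syn.seqn s₁ s₂, ts, v => ∃ ts₁ ts₂ v₁ v₂, ts = ts₁ ++ ts₂ ∧ v = (v₁, v₂) ∧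
      Matches kd env s₁ ts₁ v₁ ∧ Matches kd env s₂ ts₂ v₂
  | _, Syn.map f s, ts, v => ∃ w, v = f w ∧ Matches kd env s ts w
  | _, Syn.var x, ts, v => Matches kd env (env _ x) ts v

theorem matches_inv {A : Type} {s : Syn Token Kind Var A} {ts : List Token} {v : A}
    (h : Matches kd env s ts v) : InvStmt kd env s ts v := by
  cases h with
  | elem h => exact ⟨rfl, h⟩
  | eps v => exact ⟨rfl, rfl⟩
  | disjL h => exact Or.inl h
  | disjR h => exact Or.inr h
  | seqn h1 h2 => exact ⟨_, _, _, _, rfl, rfl, h1, h2⟩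
  | map f h => exact ⟨_, rfl, h⟩
  | var x h => exact h

theorem elem_inv {k : Kind} {ts : List Token} {v : Token}
    (h : Matches kd env (Syn.elem k) ts v) : ts = [v] ∧ kd v = k := matches_inv h

theorem eps_inv {A : Type} {v0 : A} {ts : List Token} {v : A}
    (h : Matches kd env (Syn.eps v0) ts v) : ts = [] ∧ v = v0 := matches_inv h

theorem disj_inv {A : Type} {s₁ s₂ : Syn Token Kind Var A} {ts : List Token} {v : A}
    (h : Matches kd env (Syn.disj s₁ s₂) ts v) :
    Matches kd env s₁ ts v ∨ Matches kd env s₂ ts v := matches_inv h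

theorem seqn_inv {A B : Type} {s₁ : Syn Token Kind Var A} {s₂ : Syn Token Kind Var B}
    {ts : List Token} {v : A × B} (h : Matches kd env (Syn.seqn s₁ s₂) ts v) :
    ∃ ts₁ ts₂ v₁ v₂, ts = ts₁ ++ ts₂ ∧ v = (v₁, v₂) ∧
      Matches kd env s₁ ts₁ v₁ ∧ Matches kd env s₂ ts₂ v₂ := matches_inv h

theorem mapsyn_inv {A B : Type} {f : A → B} {s : Syn Token Kind Var A} {ts : List Token} {v : B}
    (h : Matches kd env (Syn.map f s) ts v) :
    ∃ w, v = f w ∧ Matches kd env s ts w := matches_inv h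

theorem varsyn_inv {A : Type} {x : Var A} {ts : List Token} {v : A}
    (h : Matches kd env (Syn.var x) ts v) : Matches kd env (env A x) ts v := matches_inv h

theorem snf_lemma : ∀ {A : Type} {s : Syn Token Kind Var A} {ts : List Token} {v : A},
    Matches kd env s ts v → ¬ HasConflict env s → ∀ (t : Token) (u : List Token),
    (∀ v', Matches kd env s (ts ++ t :: u) v' → InSNF env (kd t) s) ∧
    (∀ ts₀ v', ts = ts₀ ++ t :: u → Matches kd env s ts₀ v' → InSNF env (kd t) s) := by
  intro A s ts v h
  induction h with
  | @elem k t0 h0 =>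
      intro hc t u
      constructor
      · intro v' h'
        rcases elem_inv h' with ⟨he, _⟩
        simp at he
      · intro ts₀ v' he h'
        rcases elem_inv h' with ⟨he', _⟩
        subst he'
        simp at he
  | eps v =>
      intro hc t u
      constructor
      · intro v' h'
        rcases eps_inv h' with ⟨he, _⟩
        simp at he
      · intro ts₀ v' he h'
        simp at he
  | @disjL A s₁ s₂ ts v h ih =>
      intro hc t u
      have hc1 : ¬ HasConflict env s₁ := fun hx => hc (.disjL hx)
      constructor
      · intro v' h'
        rcases disj_inv h' with h'' | h''
        · exact .disjL ((ih hc1 t u).1 v' h'')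
        · cases hts : ts with
          | nil =>
              exact .disjNF (matches_nil_nullable h hts)
                (matches_cons_first h'' t u (by rw [hts]; rfl))
          | cons t' r =>
              exact absurd (HasConflict.disjFF (matches_cons_first h t' r hts)
                (matches_cons_first h'' t' (r ++ t :: u) (by rw [hts]; rfl))) hc
      · intro ts₀ v' he h'
        rcases disj_inv h' with h'' | h''
        · exact .disjL ((ih hc1 t u).2 ts₀ v' he h'')
        · cases hts : ts₀ with
          | nil =>
              subst hts
              exact .disjFN (matches_cons_first h t u (by simpa using he))
                (matches_nil_nullable h'' rfl)
          | cons t' r =>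
              subst hts
              exact absurd (HasConflict.disjFF
                (matches_cons_first h t' (r ++ t :: u) (by simpa using he))
                (matches_cons_first h'' t' r rfl)) hc
  | @disjR A s₁ s₂ ts v h ih =>
      intro hc t u
      have hc2 : ¬ HasConflict env s₂ := fun hx => hc (.disjR hx)
      constructor
      · intro v' h'
        rcases disj_inv h' with h'' | h''
        · cases hts : ts with
          | nil =>
              exact .disjFN (matches_cons_first h'' t u (by rw [hts]; rfl))
                (matches_nil_nullable h hts)
          | cons t' r =>
              exact absurd (HasConflict.disjFF
                (matches_cons_first h'' t' (r ++ t :: u) (by rw [hts]; rfl))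
                (matches_cons_first h t' r hts)) hc
        · exact .disjR ((ih hc2 t u).1 v' h'')
      · intro ts₀ v' he h'
        rcases disj_inv h' with h'' | h''
        · cases hts : ts₀ with
          | nil =>
              subst hts
              exact .disjNF (matches_nil_nullable h'' rfl)
                (matches_cons_first h t u (by simpa using he))
          | cons t' r =>
              subst hts
              exact absurd (HasConflict.disjFF (matches_cons_first h'' t' r rfl)
                (matches_cons_first h t' (r ++ t :: u) (by simpa using he))) hc
        · exact .disjR ((ih hc2 t u).2 ts₀ v' he h'')
  | @seqn A B s₁ s₂ a b v₁ v₂ h1 h2 ih1 ih2 =>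
      intro hc t u
      have hc1 : ¬ HasConflict env s₁ := fun hx => hc (.seqnL hx)
      have hc2 : ¬ HasConflict env s₂ := fun hx => hc (.seqnR hx)
      constructor
      · intro v' h'
        rcases seqn_inv h' with ⟨a', b', w₁, w₂, he, _, m1, m2⟩
        rw [List.append_assoc] at he
        rcases List.append_eq_append_iff.mp he with ⟨c, hca, hb⟩ | ⟨c, hca, hb⟩
        · cases c with
          | nil =>
              simp at hca hb
              subst hca
              subst hb
              exact .seqnR (matches_productive h1) ((ih2 hc2 t u).1 w₂ m2)
          | cons t' c' =>
              have hsnf : InSNF env (kd t') s₁ :=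
                (ih1 hc1 t' c').1 w₁ (by rw [← hca]; exact m1)
              cases hbcase : b with
              | nil =>
                  rw [hbcase] at hb
                  simp at hb
                  obtain ⟨ht, _⟩ := hb
                  subst ht
                  exact .seqnL hsnf (matches_nil_nullable h2 hbcase)
              | cons t'' b₂ =>
                  rw [hbcase] at hb
                  simp at hb
                  obtain ⟨ht, _⟩ := hb
                  subst ht
                  exact absurd (HasConflict.seqnSF hsnf
                    (matches_cons_first h2 _ b₂ hbcase)) hc
        · cases c with
          | nil =>
              simp at hca hb
              subst hca
              subst hb
              exact .seqnR (matches_productive h1) ((ih2 hc2 t u).1 w₂ m2)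
          | cons t' c' =>
              have hsnf : InSNF env (kd t') s₁ :=
                (ih1 hc1 t' c').2 a' w₁ hca m1
              exact absurd (HasConflict.seqnSF hsnf
                (matches_cons_first m2 t' (c' ++ (b ++ t :: u)) hb)) hc
      · intro ts₀ v' he h'
        rcases seqn_inv h' with ⟨a₀, b₀, w₁, w₂, he₀, _, m1, m2⟩
        subst he₀
        rw [List.append_assoc] at he
        rcases List.append_eq_append_iff.mp he with ⟨c, hca, hb⟩ | ⟨c, hca, hb⟩
        · cases c with
          | nil =>
              simp at hca hb
              subst hca
              exact .seqnR (matches_productive h1) ((ih2 hc2 t u).2 b₀ w₂ hb m2)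
          | cons t' c' =>
              have hsnf : InSNF env (kd t') s₁ :=
                (ih1 hc1 t' c').1 w₁ (by rw [← hca]; exact m1)
              exact absurd (HasConflict.seqnSF hsnf
                (matches_cons_first h2 t' (c' ++ (b₀ ++ t :: u)) hb)) hc
        · cases c with
          | nil =>
              simp at hca hb
              subst hca
              exact .seqnR (matches_productive h1) ((ih2 hc2 t u).2 b₀ w₂ hb.symm m2)
          | cons t' c' =>
              have hsnf : InSNF env (kd t') s₁ :=
                (ih1 hc1 t' c').2 a₀ w₁ hca m1
              cases hbcase : b₀ with
              | nil =>
                  rw [hbcase] at hb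
                  simp at hb
                  obtain ⟨ht, _⟩ := hb
                  subst ht
                  exact .seqnL hsnf (matches_nil_nullable m2 hbcase)
              | cons t'' b₂ =>
                  rw [hbcase] at hb
                  simp at hb
                  obtain ⟨ht, _⟩ := hb
                  subst ht
                  exact absurd (HasConflict.seqnSF hsnf
                    (matches_cons_first m2 _ b₂ hbcase)) hc
  | @map A B f s ts v h ih =>
      intro hc t u
      have hcs : ¬ HasConflict env s := fun hx => hc (.map f hx)
      constructor
      · intro v' h'
        rcases mapsyn_inv h' with ⟨w, _, m⟩
        exact .map f ((ih hcs t u).1 w m)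
      · intro ts₀ v' he h'
        rcases mapsyn_inv h' with ⟨w, _, m⟩
        exact .map f ((ih hcs t u).2 ts₀ w he m)
  | @var A x ts v h ih =>
      intro hc t u
      have hcs : ¬ HasConflict env (env A x) := fun hx => hc (.var x hx)
      constructor
      · intro v' h'
        exact .var x ((ih hcs t u).1 v' (varsyn_inv h'))
      · intro ts₀ v' he h'
        exact .var x ((ih hcs t u).2 ts₀ v' he (varsyn_inv h'))

theorem matches_unique : ∀ {A : Type} {s : Syn Token Kind Var A} {ts : List Token} {v₁ : A},
    Matches kd env s ts v₁ → ¬ HasConflict env s → ∀ v₂, Matches kd env s ts v₂ → v₁ = v₂ := by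
  intro A s ts v₁ h
  induction h with
  | @elem k t0 h0 =>
      intro hc v₂ h'
      rcases elem_inv h' with ⟨he, _⟩
      simp only [List.cons.injEq, and_true] at he
      exact he
  | eps v =>
      intro hc v₂ h'
      exact (eps_inv h').2.symm
  | @disjL A s₁ s₂ ts v h ih =>
      intro hc v₂ h'
      rcases disj_inv h' with h'' | h''
      · exact ih (fun hx => hc (.disjL hx)) v₂ h''
      · cases hts : ts with
        | nil =>
            exact absurd (HasConflict.disjNN (matches_nil_nullable h hts)
              (matches_nil_nullable h'' hts)) hc
        | cons t r =>
            exact absurd (HasConflict.disjFF (matches_cons_first h t r hts)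
              (matches_cons_first h'' t r hts)) hc
  | @disjR A s₁ s₂ ts v h ih =>
      intro hc v₂ h'
      rcases disj_inv h' with h'' | h''
      · cases hts : ts with
        | nil =>
            exact absurd (HasConflict.disjNN (matches_nil_nullable h'' hts)
              (matches_nil_nullable h hts)) hc
        | cons t r =>
            exact absurd (HasConflict.disjFF (matches_cons_first h'' t r hts)
              (matches_cons_first h t r hts)) hc
      · exact ih (fun hx => hc (.disjR hx)) v₂ h''
  | @seqn A B s₁ s₂ a b v₁ v₂ h1 h2 ih1 ih2 =>
      intro hc w h'
      have hc1 : ¬ HasConflict env s₁ := fun hx => hc (.seqnL hx)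
      have hc2 : ¬ HasConflict env s₂ := fun hx => hc (.seqnR hx)
      rcases seqn_inv h' with ⟨a', b', w₁, w₂, he, hw, m1, m2⟩
      subst hw
      rcases List.append_eq_append_iff.mp he with ⟨c, hca, hb⟩ | ⟨c, hca, hb⟩
      · cases c with
        | nil =>
            simp at hca hb
            subst hca
            subst hb
            rw [ih1 hc1 w₁ m1, ih2 hc2 w₂ m2]
        | cons t c' =>
            have hsnf : InSNF env (kd t) s₁ :=
              (snf_lemma h1 hc1 t c').1 w₁ (by rw [← hca]; exact m1)
            exact absurd (HasConflict.seqnSF hsnf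
              (matches_cons_first h2 t (c' ++ b') hb)) hc
      · cases c with
        | nil =>
            simp at hca hb
            subst hca
            subst hb
            rw [ih1 hc1 w₁ m1, ih2 hc2 w₂ m2]
        | cons t c' =>
            have hsnf : InSNF env (kd t) s₁ :=
              (snf_lemma h1 hc1 t c').2 a' w₁ hca m1
            exact absurd (HasConflict.seqnSF hsnf
              (matches_cons_first m2 t (c' ++ b) hb)) hc
  | @map A B f s ts v h ih =>
      intro hc v₂ h'
      rcases mapsyn_inv h' with ⟨w, hw, m⟩
      subst hw
      exact congrArg f (ih (fun hx => hc (.map f hx)) w m)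
  | @var A x ts v h ih =>
      intro hc v₂ h'
      exact ih (fun hx => hc (.var x hx)) v₂ (varsyn_inv h')

end

end LL1U

section

variable {Token Kind : Type} {Var : Type → Type}
variable (kd : Token → Kind) (env : ∀ A : Type, Var A → Syn Token Kind Var A)


theorem ll1_unambiguous
    {A : Type} (s : Syn Token Kind Var A) (hs : ¬ HasConflict env s)
    (ts : List Token) (v₁ v₂ : A)
    (h₁ : Matches kd env s ts v₁) (h₂ : Matches kd env s ts v₂) :
    v₁ = v₂ := by
  exact LL1U.matches_unique h₁ hs v₂ h₂

end
end

section
/- The First set characterizes the kinds that can start a recognised sequence: for every syntax s : Syntax A and kind k, k ∈ First s if and only if there exist a token t with kind t = k, a token sequence ts and a value v : A with Matches s (t :: ts) v. -/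
set_option autoImplicit false

section

variable {Token Kind : Type} {Var : Type → Type}
variable (kd : Token → Kind) (env : ∀ A : Type, Var A → Syn Token Kind Var A)

lemma productive_of_matches {A : Type} {s : Syn Token Kind Var A} {ts : List Token} {v : A}
    (h : Matches kd env s ts v) : Productive env s := by
  induction h with
  | elem _ => exact Productive.elem _
  | eps v => exact Productive.eps v
  | disjL _ ih => exact Productive.disjL ih
  | disjR _ ih => exact Productive.disjR ih
  | seqn _ _ ih₁ ih₂ => exact Productive.seqn ih₁ ih₂
  | map f _ ih => exact Productive.map f ih
  | var x _ ih => exact Productive.var x ih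

lemma nullable_of_matches_nil : ∀ {A : Type} {s : Syn Token Kind Var A} {ts : List Token} {v : A},
    Matches kd env s ts v → ts = [] → Nullable env s v := by
  intro A s ts v h
  induction h with
  | elem _ => intro h; cases h
  | eps v => intro _; exact Nullable.eps v
  | disjL _ ih => intro h; exact Nullable.disjL (ih h)
  | disjR _ ih => intro h; exact Nullable.disjR (ih h)
  | seqn _ _ ih₁ ih₂ =>
      intro h
      rcases List.append_eq_nil_iff.mp h with ⟨h₁, h₂⟩
      exact Nullable.seqn (ih₁ h₁) (ih₂ h₂)
  | map f _ ih => intro h; exact Nullable.map f (ih h)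
  | var x _ ih => intro h; exact Nullable.var x (ih h)

lemma matches_of_nullable {A : Type} {s : Syn Token Kind Var A} {v : A}
    (h : Nullable env s v) : Matches kd env s [] v := by
  induction h with
  | eps v => exact Matches.eps v
  | disjL _ ih => exact Matches.disjL ih
  | disjR _ ih => exact Matches.disjR ih
  | seqn _ _ ih₁ ih₂ => exact Matches.seqn ih₁ ih₂
  | map f _ ih => exact Matches.map f ih
  | var x _ ih => exact Matches.var x ih

lemma matches_of_productive (hkinds : ∀ k : Kind, ∃ t : Token, kd t = k)
    {A : Type} {s : Syn Token Kind Var A}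
    (h : Productive env s) : ∃ ts v, Matches kd env s ts v := by
  induction h with
  | eps v => exact ⟨[], v, Matches.eps v⟩
  | elem k =>
      obtain ⟨t, ht⟩ := hkinds k
      exact ⟨[t], t, Matches.elem ht⟩
  | disjL _ ih => obtain ⟨ts, v, hm⟩ := ih; exact ⟨ts, v, Matches.disjL hm⟩
  | disjR _ ih => obtain ⟨ts, v, hm⟩ := ih; exact ⟨ts, v, Matches.disjR hm⟩
  | seqn _ _ ih₁ ih₂ =>
      obtain ⟨ts₁, v₁, h₁⟩ := ih₁; obtain ⟨ts₂, v₂, h₂⟩ := ih₂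
      exact ⟨ts₁ ++ ts₂, (v₁, v₂), Matches.seqn h₁ h₂⟩
  | map f _ ih => obtain ⟨ts, v, hm⟩ := ih; exact ⟨ts, f v, Matches.map f hm⟩
  | var x _ ih => obtain ⟨ts, v, hm⟩ := ih; exact ⟨ts, v, Matches.var x hm⟩

lemma inFirst_of_matches_cons :
    ∀ {A : Type} {s : Syn Token Kind Var A} {ts : List Token} {v : A},
    Matches kd env s ts v → ∀ {t : Token} {ts' : List Token}, ts = t :: ts' →
      InFirst env (kd t) s := by
  intro A s ts v h
  induction h with
  | elem hk =>
      intro t ts' heq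
      cases heq
      rw [hk]
      exact InFirst.elem _
  | eps v => intro _ _ h; cases h
  | disjL _ ih => intro t ts' h; exact InFirst.disjL (ih h)
  | disjR _ ih => intro t ts' h; exact InFirst.disjR (ih h)
  | @seqn _ _ _ _ ts₁ ts₂ _ _ m₁ m₂ ih₁ ih₂ =>
      intro t ts' h
      cases ts₁ with
      | nil =>
          exact InFirst.seqnR (nullable_of_matches_nil kd env m₁ rfl) (ih₂ h)
      | cons a l =>
          injection h with h1 h2
          subst h1
          exact InFirst.seqnL (ih₁ rfl) (productive_of_matches kd env m₂)
  | map f _ ih => intro t ts' h; exact InFirst.map f (ih h)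
  | var x _ ih => intro t ts' h; exact InFirst.var x (ih h)

theorem first_iff_starts
    (hkinds : ∀ k : Kind, ∃ t : Token, kd t = k)
    {A : Type} (s : Syn Token Kind Var A) (k : Kind) :
    InFirst env k s ↔
      ∃ (t : Token) (ts : List Token) (v : A), kd t = k ∧ Matches kd env s (t :: ts) v := by
  constructor
  · intro h
    induction h with
    | elem k =>
        obtain ⟨t, ht⟩ := hkinds k
        exact ⟨t, [], t, ht, Matches.elem ht⟩
    | disjL _ ih =>
        obtain ⟨t, ts, v, htk, hm⟩ := ih
        exact ⟨t, ts, v, htk, Matches.disjL hm⟩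
    | disjR _ ih =>
        obtain ⟨t, ts, v, htk, hm⟩ := ih
        exact ⟨t, ts, v, htk, Matches.disjR hm⟩
    | seqnL _ hp ih =>
        obtain ⟨t, ts, v, htk, hm⟩ := ih
        obtain ⟨ts₂, v₂, hm₂⟩ := matches_of_productive kd env hkinds hp
        exact ⟨t, ts ++ ts₂, (v, v₂), htk, Matches.seqn hm hm₂⟩
    | seqnR hn _ ih =>
        obtain ⟨t, ts, v, htk, hm⟩ := ih
        exact ⟨t, ts, (_, v), htk,
          Matches.seqn (matches_of_nullable kd env hn) hm⟩
    | map f _ ih =>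
        obtain ⟨t, ts, v, htk, hm⟩ := ih
        exact ⟨t, ts, f v, htk, Matches.map f hm⟩
    | var x _ ih =>
        obtain ⟨t, ts, v, htk, hm⟩ := ih
        exact ⟨t, ts, v, htk, Matches.var x hm⟩
  · rintro ⟨t, ts, v, rfl, hm⟩
    exact inFirst_of_matches_cons kd env hm rfl

end
end

section
/- Uniqueness of the nullable value for LL(1) syntaxes: for every syntax s : Syntax A with ¬HasConflict s and all values v₁, v₂ : A, if Nullable s v₁ and Nullable s v₂ then v₁ = v₂ (so the partial function nullable? returning the nullable value is well-defined on LL(1) syntaxes). -/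
set_option autoImplicit false

section

variable {Token Kind : Type} {Var : Type → Type}
variable (kd : Token → Kind) (env : ∀ A : Type, Var A → Syn Token Kind Var A)

/-- One-step unfolding of `Nullable`, defined by recursion on the syntax. -/
def NullSpec : ∀ {A : Type}, Syn Token Kind Var A → A → Prop
  | _, Syn.elem _, _ => False
  | _, Syn.fail, _ => False
  | _, Syn.eps v, w => v = w
  | _, Syn.disj s₁ s₂, v => Nullable env s₁ v ∨ Nullable env s₂ v
  | _, Syn.seqn s₁ s₂, v => Nullable env s₁ v.1 ∧ Nullable env s₂ v.2
  | _, Syn.map f s, v => ∃ w, Nullable env s w ∧ f w = v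
  | A, Syn.var x, v => Nullable env (env A x) v

theorem nullable_spec {A : Type} {s : Syn Token Kind Var A} {v : A}
    (h : Nullable env s v) : NullSpec env s v := by
  induction h with
  | eps v => rfl
  | disjL h _ => exact Or.inl h
  | disjR h _ => exact Or.inr h
  | seqn h₁ h₂ _ _ => exact ⟨h₁, h₂⟩
  | map f h _ => exact ⟨_, h, rfl⟩
  | var x h _ => exact h

theorem nullable_value_unique
    {A : Type} (s : Syn Token Kind Var A) (hs : ¬ HasConflict env s)
    (v₁ v₂ : A) (h₁ : Nullable env s v₁) (h₂ : Nullable env s v₂) :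
    v₁ = v₂ := by
  induction h₁ with
  | eps => cases h₂; rfl
  | disjL h ih =>
    cases h₂ with
    | disjL h' => exact ih (fun c => hs (.disjL c)) _ h'
    | disjR h' => exact absurd (HasConflict.disjNN h h') hs
  | disjR h ih =>
    cases h₂ with
    | disjL h' => exact absurd (HasConflict.disjNN h' h) hs
    | disjR h' => exact ih (fun c => hs (.disjR c)) _ h'
  | seqn ha hb iha ihb =>
    obtain ⟨ha', hb'⟩ := nullable_spec env h₂
    exact Prod.ext (iha (fun c => hs (.seqnL c)) _ ha') (ihb (fun c => hs (.seqnR c)) _ hb')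
  | map f h ih =>
    obtain ⟨w, hw, hfw⟩ := nullable_spec env h₂
    rw [← hfw, ih (fun c => hs (.map f c)) _ hw]
  | var x h ih =>
    cases h₂ with
    | var _ h' => exact ih (fun c => hs (.var x c)) _ h' 

end
end
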